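/- arXiv:math/0310275 — 5 statements merged into one kernel-verified Lean document; each statement's English description precedes it below -/
import Mathlib

section
/- For every integer ℓ ≥ 1, if H ∈ M_2(Z_p[[X]]) satisfies H·P_0 = p^ℓ·P_0·H, then H = 0. -/
open PowerSeries Filter Finset

noncomputable section

variable (p : ℕ) [Fact p.Prime]

/-- Substitution of a power series `g` (with zero constant coefficient in all our uses)
into a power series `f`: the coefficient of degree `j` of `f(g)` only involves the
monomials of `f` of degree `≤ j`. -/
def psSubst {A : Type*} [CommRing A] (g f : PowerSeries A) : PowerSeries A :=
  PowerSeries.mk fun j => ∑ i ∈ Finset.range (j + 1),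
    PowerSeries.coeff i f * PowerSeries.coeff j (g ^ i)

/-- The endomorphism `φ` of `A[[π]]`, substituting `(1+π)^p - 1` for `π`. -/
def phiA (A : Type*) [CommRing A] : PowerSeries A → PowerSeries A :=
  psSubst ((1 + PowerSeries.X) ^ p - 1)

/-- The binomial coefficient `binom(c, n)` for `c ∈ ℤ_p`, computed in `ℚ_p`. -/
def binomC (c : ℤ_[p]) (n : ℕ) : ℚ_[p] :=
  Polynomial.eval (c : ℚ_[p]) (descPochhammer ℚ_[p] n) / (n.factorial : ℚ_[p])

/-- The binomial power series `(1+π)^c = ∑_{n≥0} binom(c,n) π^n` for `c ∈ ℤ_p`. -/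
def onePlusPiPow (c : ℤ_[p]) : PowerSeries ℚ_[p] := PowerSeries.mk (binomC p c)

/-- The endomorphism `γ_c` of `ℚ_p[[π]]`, substituting `(1+π)^c - 1` for `π`. -/
def gammaQ (c : ℤ_[p]) : PowerSeries ℚ_[p] → PowerSeries ℚ_[p] :=
  psSubst (onePlusPiPow p c - 1)

/-- The partial products `∏_{n=0}^{N} φ^{2n+1}(q)/p` (whose limit is `λ₊`). -/
def partialPlus (q : PowerSeries ℚ_[p]) (N : ℕ) : PowerSeries ℚ_[p] :=
  ∏ n ∈ Finset.range (N + 1), (p : ℚ_[p])⁻¹ • (phiA p ℚ_[p])^[2 * n + 1] q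

/-- The partial products `∏_{n=0}^{N} φ^{2n}(q)/p` (whose limit is `λ₋`). -/
def partialMinus (q : PowerSeries ℚ_[p]) (N : ℕ) : PowerSeries ℚ_[p] :=
  ∏ n ∈ Finset.range (N + 1), (p : ℚ_[p])⁻¹ • (phiA p ℚ_[p])^[2 * n] q

/-- Convergence in `ℚ_p[[π]]` for the topology of coefficientwise convergence. -/
def CoeffTendsto (F : ℕ → PowerSeries ℚ_[p]) (L : PowerSeries ℚ_[p]) : Prop :=
  ∀ d : ℕ, Filter.Tendsto (fun N => PowerSeries.coeff d (F N))
    Filter.atTop (nhds (PowerSeries.coeff d L))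

/-- A power series with `ℚ_p` coefficients has all its coefficients in `ℤ_p`. -/
def IntSeries (f : PowerSeries ℚ_[p]) : Prop := ∀ n, ‖PowerSeries.coeff n f‖ ≤ 1

/-- Membership in the ring `R` of series `∑ a_i π^i` with `v_p(a_i) + i/(p-1) ≥ 0`,
expressed via norms: `‖a_i‖ ≤ p^{i/(p-1)}`. -/
def memR (f : PowerSeries ℚ_[p]) : Prop :=
  ∀ i : ℕ, ‖PowerSeries.coeff i f‖ ≤ (p : ℝ) ^ ((i : ℝ) / ((p : ℝ) - 1))

/-- The series `p^m λ₋^{k-1} λ₊^{-(k-1)}`, where `m = ⌊(k-2)/(p-1)⌋`. -/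
def zFull (k : ℕ) (lamPlus lamMinus : PowerSeries ℚ_[p]) : PowerSeries ℚ_[p] :=
  (p : PowerSeries ℚ_[p]) ^ ((k - 2) / (p - 1)) * lamMinus ^ (k - 1) * lamPlus⁻¹ ^ (k - 1)

/-- The truncation `z = z_0 + z_1 π + ⋯ + z_{k-2} π^{k-2}` of `p^m λ₋^{k-1} λ₊^{-(k-1)}`. -/
def zSeries (k : ℕ) (lamPlus lamMinus : PowerSeries ℚ_[p]) : PowerSeries ℚ_[p] :=
  PowerSeries.mk fun i =>
    if i ≤ k - 2 then PowerSeries.coeff i (zFull p k lamPlus lamMinus) else 0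

/-- The two-variable power series ring `ℚ_p[[π, X]]`, realized as `(ℚ_p[[π]])[[X]]`:
the inner variable is `π` and the outer variable is `X`. -/
abbrev PS2 := PowerSeries (PowerSeries ℚ_[p])

/-- `φ` extended to `ℚ_p[[π, X]]`, acting as before on `π` and trivially on `X`. -/
def phi2 : PS2 p → PS2 p := fun F =>
  PowerSeries.mk fun n => phiA p ℚ_[p] (PowerSeries.coeff n F)

/-- `γ_c` extended to `ℚ_p[[π, X]]`, acting as before on `π` and trivially on `X`. -/
def gamma2 (c : ℤ_[p]) : PS2 p → PS2 p := fun F =>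
  PowerSeries.mk fun n => gammaQ p c (PowerSeries.coeff n F)

/-- A two-variable power series has all its coefficients in `ℤ_p`,
i.e. lies in `ℤ_p[[π, X]]`. -/
def IntSeries2 (F : PS2 p) : Prop :=
  ∀ n j, ‖PowerSeries.coeff j (PowerSeries.coeff n F)‖ ≤ 1

/-- The element `π` of `ℚ_p[[π, X]]`. -/
def piVar : PS2 p := PowerSeries.C PowerSeries.X

/-- The matrix `P(X)` with rows `(0, -1)` and `(q^{k-1}, X·z)`. -/
def Pmat (k : ℕ) (q z : PowerSeries ℚ_[p]) : Matrix (Fin 2) (Fin 2) (PS2 p) :=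
  !![0, -1;
     PowerSeries.C (q ^ (k - 1)),
       PowerSeries.X * PowerSeries.C z]

/-- A matrix has entries in `ℤ_p[[π, X]]`. -/
def IntMat (H : Matrix (Fin 2) (Fin 2) (PS2 p)) : Prop := ∀ i j, IntSeries2 p (H i j)

/-- A matrix is `≡ Id mod π`, i.e. `H - Id ∈ π · M₂(ℤ_p[[π, X]])`. -/
def ModPiId (H : Matrix (Fin 2) (Fin 2) (PS2 p)) : Prop :=
  ∃ H' : Matrix (Fin 2) (Fin 2) (PS2 p), IntMat p H' ∧ H = 1 + piVar p • H'

/-- The conditions satisfied by the matrix `G_c(X)`: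
entries in `ℤ_p[[π,X]]`, `G ≡ Id mod π`, and `P(X)·φ(G) = G·γ_c(P(X))`. -/
def IsGmat (k : ℕ) (q z : PowerSeries ℚ_[p]) (c : ℤ_[p])
    (G : Matrix (Fin 2) (Fin 2) (PS2 p)) : Prop :=
  IntMat p G ∧ ModPiId p G ∧
    Pmat p k q z * G.map (phi2 p) = G * (Pmat p k q z).map (gamma2 p c)

/-- The matrix `P₀` with rows `(0, -1)` and `(p^{k-1}, p^m X)`, `m = ⌊(k-2)/(p-1)⌋`. -/
def P0mat (k : ℕ) : Matrix (Fin 2) (Fin 2) (PowerSeries ℤ_[p]) :=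
  !![0, -1;
     (p : PowerSeries ℤ_[p]) ^ (k - 1),
       (p : PowerSeries ℤ_[p]) ^ ((k - 2) / (p - 1)) * PowerSeries.X]

section Efield

variable (E : Type*) [NormedField E] [NormedAlgebra ℚ_[p] E] [IsUltrametricDist E]

/-- The ring of integers `O_E` of `E`: the elements of norm at most `1`. -/
def ringOfInt : Subring E where
  carrier := {x : E | ‖x‖ ≤ 1}
  zero_mem' := by simp
  one_mem' := by simp
  add_mem' {a b} ha hb := le_trans (IsUltrametricDist.norm_add_le_max a b) (max_le ha hb)
  neg_mem' {a} ha := by simpa using ha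
  mul_mem' {a b} ha hb := by
    have h := norm_mul a b
    simp only [Set.mem_setOf_eq] at *
    nlinarith [norm_nonneg a, norm_nonneg b]

/-- Evaluation `ev_α : ℚ_p[[π, X]] → E[[π]]` substituting `α` for `X`. -/
def evalX (α : E) (F : PS2 p) : PowerSeries E :=
  PowerSeries.mk fun j =>
    ∑' n : ℕ, algebraMap ℚ_[p] E
      (PowerSeries.coeff j (PowerSeries.coeff n F)) * α ^ n

/-- `γ_c` on `E[[π]]`: substitution of `(1+π)^c - 1` for `π` (coefficients mapped to `E`). -/
def gammaE (c : ℤ_[p]) : PowerSeries E → PowerSeries E :=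
  psSubst ((onePlusPiPow p c).map (algebraMap ℚ_[p] E) - 1)

end Efield

end

theorem statement11 (p : ℕ) [Fact p.Prime] (k : ℕ) (hk : 2 ≤ k)
    (l : ℕ) (hl : 1 ≤ l)
    (H : Matrix (Fin 2) (Fin 2) (PowerSeries ℤ_[p]))
    (hH : H * P0mat p k = (p : PowerSeries ℤ_[p]) ^ l • (P0mat p k * H)) :
    H = 0 := by
  classical
  set P := P0mat p k with hPdef
  set q : PowerSeries ℤ_[p] := (p : PowerSeries ℤ_[p]) ^ l with hq
  set t : PowerSeries ℤ_[p] := (p : PowerSeries ℤ_[p]) ^ ((k - 2) / (p - 1)) * PowerSeries.X with ht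
  set d : PowerSeries ℤ_[p] := (p : PowerSeries ℤ_[p]) ^ (k - 1) with hd
  -- Cayley–Hamilton for P
  have hCH : P * P = t • P - d • (1 : Matrix (Fin 2) (Fin 2) (PowerSeries ℤ_[p])) := by
    rw [hPdef]
    unfold P0mat
    ext i j
    fin_cases i <;> fin_cases j <;>
      simp [Matrix.mul_apply, Fin.sum_univ_two, Matrix.smul_apply, Matrix.one_apply,
        smul_eq_mul, ht, hd] <;> ring
  have h1 : H * (P * P) = (q * q) • ((P * P) * H) := by
    calc H * (P * P) = (H * P) * P := by rw [mul_assoc]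
      _ = (q • (P * H)) * P := by rw [hH]
      _ = q • (P * (H * P)) := by rw [Matrix.smul_mul, mul_assoc]
      _ = q • (P * (q • (P * H))) := by rw [hH]
      _ = (q * q) • ((P * P) * H) := by rw [Matrix.mul_smul, smul_smul, mul_assoc]
  rw [hCH] at h1
  have h1' : (t * q) • (P * H) - d • H = (q * q * t) • (P * H) - (q * q * d) • H := by
    calc (t * q) • (P * H) - d • H
        = H * (t • P - d • (1 : Matrix (Fin 2) (Fin 2) (PowerSeries ℤ_[p]))) := by
          rw [Matrix.mul_sub, Matrix.mul_smul, Matrix.mul_smul, Matrix.mul_one, hH,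
            smul_smul]
      _ = (q * q) • ((t • P - d • (1 : Matrix (Fin 2) (Fin 2) (PowerSeries ℤ_[p]))) * H) := h1
      _ = (q * q * t) • (P * H) - (q * q * d) • H := by
          rw [Matrix.sub_mul, Matrix.smul_mul, Matrix.smul_mul, Matrix.one_mul, smul_sub,
            smul_smul, smul_smul]
  have key : (t * (q - q * q)) • (P * H) = (d * (1 - q * q)) • H := by
    have h2 : (t * (q - q * q)) • (P * H) - (d * (1 - q * q)) • H =
        ((t * q) • (P * H) - d • H) - ((q * q * t) • (P * H) - (q * q * d) • H) := by
      ext i j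
      simp only [Matrix.sub_apply, Matrix.smul_apply, smul_eq_mul]
      ring
    rw [h1', sub_self] at h2
    exact sub_eq_zero.mp h2
  -- scalar identities
  set u : ℤ_[p] := (p : ℤ_[p]) ^ ((k - 2) / (p - 1)) *
      ((p : ℤ_[p]) ^ l - (p : ℤ_[p]) ^ l * (p : ℤ_[p]) ^ l) with hu
  set e : ℤ_[p] := (p : ℤ_[p]) ^ (k - 1) *
      (1 - (p : ℤ_[p]) ^ l * (p : ℤ_[p]) ^ l) with he
  have hCp : ((p : ℕ) : PowerSeries ℤ_[p]) = PowerSeries.C ((p : ℕ) : ℤ_[p]) :=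
    (map_natCast (PowerSeries.C) p).symm
  have hscal1 : t * (q - q * q) = PowerSeries.C u * PowerSeries.X := by
    rw [ht, hq, hu, hCp]
    push_cast [map_mul, map_sub, map_pow]
    ring
  have hscal2 : d * (1 - q * q) = PowerSeries.C e := by
    rw [hd, hq, he, hCp]
    push_cast [map_mul, map_sub, map_pow, map_one]
    ring
  have hij : ∀ i j, PowerSeries.C u * (PowerSeries.X * (P * H) i j) =
      PowerSeries.C e * H i j := by
    intro i j
    have := congrFun (congrFun key i) j
    simp only [Matrix.smul_apply, smul_eq_mul] at this
    rw [hscal1, hscal2] at this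
    rw [← this, mul_assoc]
  have hene : e ≠ 0 := by
    rw [he]
    have hp0 : ((p : ℕ) : ℤ_[p]) ≠ 0 := by
      exact_mod_cast Nat.cast_ne_zero.mpr (Fact.out : p.Prime).ne_zero
    have hlt : ‖(p : ℤ_[p]) ^ l * (p : ℤ_[p]) ^ l‖ < 1 := by
      rw [norm_mul, norm_pow, PadicInt.norm_p]
      have hp1 : (1 : ℝ) < (p : ℝ) := by
        exact_mod_cast (Fact.out : p.Prime).one_lt
      have hinv : ((p : ℝ))⁻¹ < 1 := by
        rw [inv_lt_one_iff₀]; right; exact hp1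
      have hnn : (0 : ℝ) ≤ ((p : ℝ))⁻¹ := by positivity
      have h1 : ((p : ℝ))⁻¹ ^ l < 1 := pow_lt_one₀ hnn hinv (by omega)
      have h2 : ((p : ℝ))⁻¹ ^ l ≤ 1 := le_of_lt h1
      nlinarith [pow_nonneg hnn l]
    have hne1 : (1 : ℤ_[p]) - (p : ℤ_[p]) ^ l * (p : ℤ_[p]) ^ l ≠ 0 := by
      intro hcon
      have : (p : ℤ_[p]) ^ l * (p : ℤ_[p]) ^ l = 1 := by linear_combination -hcon
      rw [this, norm_one] at hlt
      exact lt_irrefl _ hlt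
    exact mul_ne_zero (pow_ne_zero _ hp0) hne1
  have main : ∀ n : ℕ, ∀ i j, PowerSeries.coeff n (H i j) = 0 := by
    intro n
    induction n using Nat.strong_induction_on with
    | _ n ih =>
      intro i j
      have h := congrArg (PowerSeries.coeff n) (hij i j)
      rw [PowerSeries.coeff_C_mul, PowerSeries.coeff_C_mul] at h
      have hx : PowerSeries.coeff n (PowerSeries.X * (P * H) i j) = 0 := by
        cases n with
        | zero =>
          simp [PowerSeries.coeff_zero_eq_constantCoeff, map_mul]
        | succ m =>
          rw [PowerSeries.coeff_succ_X_mul]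
          rw [Matrix.mul_apply, map_sum]
          refine Finset.sum_eq_zero fun x _ => ?_
          rw [PowerSeries.coeff_mul]
          refine Finset.sum_eq_zero fun ab hab => ?_
          have hb : ab.2 ≤ m := by
            have := Finset.HasAntidiagonal.mem_antidiagonal.mp hab
            omega
          rw [ih ab.2 (lt_of_le_of_lt hb (Nat.lt_succ_self m)) x j, mul_zero]
      rw [hx, mul_zero] at h
      exact (mul_eq_zero.mp h.symm).resolve_left hene
  ext i j n
  simpa using main n i j
end

section
/- For every integer ℓ ≥ k, the Z_p[[X]]-linear map from M_2(Z_p[[X]]) to itself sending H to H − p^{ℓ−k}·P_0·H·adj(P_0) is bijective, where adj(P_0) is the adjugate matrix of P_0 (so that, since det P_0 = p^{k−1}, this map is H ↦ H − P_0·H·(p^{ℓ−1}·P_0^{−1})). -/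
open PowerSeries Filter Finset

private lemma aux_det4 {S : Type*} [CommRing S] (a b c : S) :
    (!![1,0,0,-a; 0,1,c,0; 0,b,1,0; -a,0,0,1]).det = (1-a^2)*(1-b*c) := by
  simp [Matrix.det_succ_row_zero, Fin.sum_univ_succ,
    show (Fin.castSucc 2 : Fin 4) = 2 from rfl,
    show (Fin.succAbove 3 2 : Fin 4) = 2 from rfl]
  ring

set_option maxHeartbeats 1000000 in
private lemma aux_key {S : Type*} [CommRing S] (c q s : S) :
    (LinearMap.id - c • ((LinearMap.mulLeft S !![0,-1;q,s]).comp
        (LinearMap.mulRight S !![s,1;-q,0]))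
      : Module.End S (Matrix (Fin 2) (Fin 2) S))
    = Matrix.toLinAlgEquiv (Matrix.stdBasis S (Fin 2) (Fin 2))
        ((!![1, 0, c*s, -(c*q);
             0, 1, c, 0;
             -(c*q*s), c*q^2, 1-c*s^2, c*q*s;
             -(c*q), 0, -(c*s), 1]).submatrix finProdFinEquiv finProdFinEquiv) := by
  classical
  apply (Matrix.stdBasis S (Fin 2) (Fin 2)).ext
  rintro ⟨i, j⟩
  rw [Matrix.toLinAlgEquiv_self, Fintype.sum_prod_type]
  simp only [Matrix.stdBasis_eq_single, Fin.sum_univ_two]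
  fin_cases i <;> fin_cases j <;>
  · ext a b' : 2
    fin_cases a <;> fin_cases b' <;>
      · simp [Matrix.mul_apply, Fin.sum_univ_two, Matrix.single,
          Matrix.submatrix_apply, finProdFinEquiv, Matrix.smul_apply,
          Matrix.vecMul, Matrix.vecHead, Matrix.vecTail, dotProduct]
        try ring

private lemma aux_unit (p : ℕ) [Fact p.Prime] (n : ℕ) (hn : 1 ≤ n) :
    IsUnit (1 - (p:ℤ_[p])^n) := by
  have h : ‖(p:ℤ_[p])^n‖ < 1 := by
    rw [norm_pow, PadicInt.norm_p]
    apply pow_lt_one₀ (by positivity)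
    · rw [inv_lt_one_iff₀]
      right
      exact_mod_cast (Fact.out : p.Prime).one_lt
    · omega
  exact (Units.oneSub _ h).isUnit

theorem statement12 (p : ℕ) [Fact p.Prime] (k : ℕ) (hk : 2 ≤ k)
    (l : ℕ) (hl : k ≤ l) :
    Function.Bijective (fun H : Matrix (Fin 2) (Fin 2) (PowerSeries ℤ_[p]) =>
      H - (p : PowerSeries ℤ_[p]) ^ (l - k) • (P0mat p k * H * (P0mat p k).adjugate)) := by
  classical
  set R := PowerSeries ℤ_[p] with hR
  set q : R := (p : R) ^ (k - 1) with hq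
  set s : R := (p : R) ^ ((k - 2) / (p - 1)) * PowerSeries.X with hs
  set c : R := (p : R) ^ (l - k) with hc
  have hP : P0mat p k = !![0, -1; q, s] := rfl
  have hadj : (P0mat p k).adjugate = !![s, 1; -q, 0] := by
    rw [hP, Matrix.adjugate_fin_two_of]
    norm_num
  have hfun : (fun H : Matrix (Fin 2) (Fin 2) R =>
      H - c • (P0mat p k * H * (P0mat p k).adjugate)) =
      ⇑(LinearMap.id - c • ((LinearMap.mulLeft R !![0,-1;q,s]).comp
        (LinearMap.mulRight R !![s,1;-q,0]))
        : Module.End R (Matrix (Fin 2) (Fin 2) R)) := by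
    funext H
    rw [hadj, hP]
    simp only [LinearMap.sub_apply, LinearMap.id_apply, LinearMap.smul_apply,
      LinearMap.coe_comp, Function.comp_apply, LinearMap.mulLeft_apply,
      LinearMap.mulRight_apply]
    rw [mul_assoc]
  rw [hfun, aux_key, ← Module.End.isUnit_iff]
  apply IsUnit.map
  rw [Matrix.isUnit_iff_isUnit_det, Matrix.det_submatrix_equiv_self,
    PowerSeries.isUnit_iff_constantCoeff, RingHom.map_det, RingHom.mapMatrix_apply]
  have hmap : (!![1, 0, c*s, -(c*q);
             0, 1, c, 0;
             -(c*q*s), c*q^2, 1-c*s^2, c*q*s;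
             -(c*q), 0, -(c*s), 1]).map (PowerSeries.constantCoeff (R := ℤ_[p])) =
      !![1, 0, 0, -((p:ℤ_[p])^(l-1));
         0, 1, (p:ℤ_[p])^(l-k), 0;
         0, (p:ℤ_[p])^(l+k-2), 1, 0;
         -((p:ℤ_[p])^(l-1)), 0, 0, 1] := by
    ext i j
    fin_cases i <;> fin_cases j <;>
      simp [hq, hs, hc, ← pow_add] <;>
      ring_nf <;>
      rw [← pow_add] <;> congr 1 <;> omega
  rw [hmap, aux_det4]
  have e1 : ((p:ℤ_[p])^(l-1))^2 = (p:ℤ_[p])^(2*l-2) := by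
    rw [← pow_mul]; congr 1; omega
  have e2 : (p:ℤ_[p])^(l+k-2) * (p:ℤ_[p])^(l-k) = (p:ℤ_[p])^(2*l-2) := by
    rw [← pow_add]; congr 1; omega
  rw [e1, e2]
  exact (aux_unit p _ (by omega)).mul (aux_unit p _ (by omega))
end

section
/- Let c, d ∈ Z_p^× and suppose G_c, G_d, G_{cd} ∈ M_2(Z_p[[π,X]]) each satisfy G_e ≡ Id mod π and P(X)·φ(G_e) = G_e·γ_e(P(X)), for e = c, d and cd respectively (note γ_c ∘ γ_d = γ_{cd}). Then G_{cd} = G_c·γ_c(G_d). -/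
open PowerSeries Filter Finset

namespace Aux
variable {A : Type*} [CommRing A]

lemma coeff_psSubst (g f : PowerSeries A) (j : ℕ) :
    coeff j (psSubst g f) =
      ∑ i ∈ range (j + 1), coeff i f * coeff j (g ^ i) := by
  simp [psSubst]

lemma coeff_pow_eq_zero {g : PowerSeries A} (hg : constantCoeff g = 0)
    {m n : ℕ} (h : m < n) : coeff m (g ^ n) = 0 := by
  have : (X : PowerSeries A) ^ n ∣ g ^ n :=
    pow_dvd_pow_of_dvd (X_dvd_iff.mpr hg) n
  exact (X_pow_dvd_iff.mp this) m h

lemma coeff_self_pow {g : PowerSeries A} (hg : constantCoeff g = 0) (n : ℕ) :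
    coeff n (g ^ n) = (coeff 1 g) ^ n := by
  induction n with
  | zero => simp
  | succ n ih =>
    rw [pow_succ, coeff_mul]
    rw [Finset.sum_eq_single (n, 1)]
    · rw [ih, pow_succ, mul_comm]
    · rintro ⟨x, y⟩ hxy hne
      rw [Finset.HasAntidiagonal.mem_antidiagonal] at hxy
      rcases lt_trichotomy x n with h | h | h
      · rw [coeff_pow_eq_zero hg h, zero_mul]
      · exfalso; apply hne; simp only [Prod.mk.injEq]; omega
      · have hy : y = 0 := by omega
        subst hy
        rw [coeff_zero_eq_constantCoeff, hg, mul_zero]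
    · intro h
      exact absurd (by simp [Finset.HasAntidiagonal.mem_antidiagonal]) h

lemma psSubst_add (g f1 f2 : PowerSeries A) :
    psSubst g (f1 + f2) = psSubst g f1 + psSubst g f2 := by
  ext j
  simp [coeff_psSubst, add_mul, Finset.sum_add_distrib]

lemma psSubst_C (g : PowerSeries A) (a : A) :
    psSubst g (C a) = C a := by
  ext j
  rw [coeff_psSubst, Finset.sum_eq_single 0]
  · simp [coeff_C]
  · intro i hi hne
    simp [coeff_C, hne]
  · simp

lemma psSubst_one (g : PowerSeries A) : psSubst g 1 = 1 := by
  have := psSubst_C g 1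
  simpa using this

lemma psSubst_X {g : PowerSeries A} (hg : constantCoeff g = 0) :
    psSubst g X = g := by
  ext j
  rw [coeff_psSubst]
  rcases Nat.eq_zero_or_pos j with h | h
  · subst h
    simp [coeff_X, hg]
  · rw [Finset.sum_eq_single 1]
    · simp
    · intro i hi hne; simp [coeff_X, hne]
    · intro hmem; exfalso; apply hmem; simp; omega

end Aux
namespace Aux2
open Aux
variable {A : Type*} [CommRing A]

lemma psSubst_mul {g : PowerSeries A} (hg : constantCoeff g = 0) (f1 f2 : PowerSeries A) :
    psSubst g (f1 * f2) = psSubst g f1 * psSubst g f2 := by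
  ext j
  set T : ℕ × ℕ → A := fun P =>
    coeff P.1 f1 * coeff P.2 f2 * coeff j (g ^ (P.1 + P.2)) with hT
  have hTzero : ∀ P : ℕ × ℕ, j < P.1 + P.2 → T P = 0 := by
    intro P hP
    simp only [hT, coeff_pow_eq_zero hg hP, mul_zero]
  have step1 : coeff j (psSubst g (f1 * f2)) =
      ∑ i ∈ range (j + 1), ∑ P ∈ antidiagonal i, T P := by
    rw [coeff_psSubst]
    refine Finset.sum_congr rfl fun i _ => ?_
    rw [coeff_mul, Finset.sum_mul]
    refine Finset.sum_congr rfl fun P hP => ?_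
    rw [Finset.HasAntidiagonal.mem_antidiagonal] at hP
    rw [hT]; simp only [hP]
  have hdisj : ∀ x ∈ range (j+1), ∀ y ∈ range (j+1), x ≠ y →
      Disjoint (antidiagonal x) (antidiagonal y) := by
    intro x _ y _ hxy
    rw [Finset.disjoint_left]
    intro P hPx hPy
    rw [Finset.HasAntidiagonal.mem_antidiagonal] at hPx hPy
    exact hxy (hPx ▸ hPy)
  have step2 : ∑ i ∈ range (j + 1), ∑ P ∈ antidiagonal i, T P
      = ∑ P ∈ range (j+1) ×ˢ range (j+1), T P := by
    rw [← Finset.sum_biUnion hdisj]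
    apply Finset.sum_subset
    · intro P hP
      rw [Finset.mem_biUnion] at hP
      obtain ⟨i, hi, hPi⟩ := hP
      rw [Finset.mem_range] at hi
      rw [Finset.HasAntidiagonal.mem_antidiagonal] at hPi
      rw [Finset.mem_product, Finset.mem_range, Finset.mem_range]
      omega
    · intro P _ hP
      apply hTzero
      by_contra h
      push_neg at h
      apply hP
      rw [Finset.mem_biUnion]
      exact ⟨P.1 + P.2, Finset.mem_range.mpr (by omega),
        Finset.HasAntidiagonal.mem_antidiagonal.mpr rfl⟩
  have step3 : coeff j (psSubst g f1 * psSubst g f2)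
      = ∑ P ∈ range (j+1) ×ˢ range (j+1), T P := by
    rw [coeff_mul]
    have inner1 : ∀ P : ℕ × ℕ, P ∈ antidiagonal j →
        coeff P.1 (psSubst g f1) =
          ∑ a ∈ range (j+1), coeff a f1 * coeff P.1 (g ^ a) := by
      intro P hP
      rw [Finset.HasAntidiagonal.mem_antidiagonal] at hP
      rw [coeff_psSubst]
      apply Finset.sum_subset
      · intro a ha; rw [Finset.mem_range] at *; omega
      · intro a _ ha
        rw [Finset.mem_range, not_lt] at ha
        rw [coeff_pow_eq_zero hg (by omega), mul_zero]
    have inner2 : ∀ P : ℕ × ℕ, P ∈ antidiagonal j →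
        coeff P.2 (psSubst g f2) =
          ∑ b ∈ range (j+1), coeff b f2 * coeff P.2 (g ^ b) := by
      intro P hP
      rw [Finset.HasAntidiagonal.mem_antidiagonal] at hP
      rw [coeff_psSubst]
      apply Finset.sum_subset
      · intro a ha; rw [Finset.mem_range] at *; omega
      · intro a _ ha
        rw [Finset.mem_range, not_lt] at ha
        rw [coeff_pow_eq_zero hg (by omega), mul_zero]
    calc ∑ P ∈ antidiagonal j, coeff P.1 (psSubst g f1) * coeff P.2 (psSubst g f2)
        = ∑ P ∈ antidiagonal j, ∑ a ∈ range (j+1), ∑ b ∈ range (j+1),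
            (coeff a f1 * coeff P.1 (g ^ a)) * (coeff b f2 * coeff P.2 (g ^ b)) := by
          refine Finset.sum_congr rfl fun P hP => ?_
          rw [inner1 P hP, inner2 P hP, Finset.sum_mul_sum]
      _ = ∑ a ∈ range (j+1), ∑ b ∈ range (j+1), ∑ P ∈ antidiagonal j,
            (coeff a f1 * coeff P.1 (g ^ a)) * (coeff b f2 * coeff P.2 (g ^ b)) := by
          rw [Finset.sum_comm]
          refine Finset.sum_congr rfl fun a _ => Finset.sum_comm
      _ = ∑ a ∈ range (j+1), ∑ b ∈ range (j+1), T (a, b) := by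
          refine Finset.sum_congr rfl fun a _ => Finset.sum_congr rfl fun b _ => ?_
          have : ∑ P ∈ antidiagonal j,
              (coeff a f1 * coeff P.1 (g ^ a)) * (coeff b f2 * coeff P.2 (g ^ b))
              = coeff a f1 * coeff b f2 *
                ∑ P ∈ antidiagonal j, coeff P.1 (g ^ a) * coeff P.2 (g ^ b) := by
            rw [Finset.mul_sum]
            refine Finset.sum_congr rfl fun P _ => by ring
          rw [this, ← coeff_mul, ← pow_add]
      _ = ∑ P ∈ range (j+1) ×ˢ range (j+1), T P := by
          rw [Finset.sum_product]
  rw [step1, step2, ← step3]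

lemma psSubst_pow {g : PowerSeries A} (hg : constantCoeff g = 0)
    (f : PowerSeries A) (l : ℕ) :
    psSubst g (f ^ l) = (psSubst g f) ^ l := by
  induction l with
  | zero => simpa using psSubst_one g
  | succ l ih => rw [pow_succ, psSubst_mul hg, ih, pow_succ]

lemma psSubst_comp {g1 g2 : PowerSeries A} (h1 : constantCoeff g1 = 0)
    (h2 : constantCoeff g2 = 0) (f : PowerSeries A) :
    psSubst g1 (psSubst g2 f) = psSubst (psSubst g1 g2) f := by
  ext j
  rw [coeff_psSubst, coeff_psSubst]
  calc ∑ i ∈ range (j+1), coeff i (psSubst g2 f) * coeff j (g1 ^ i)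
      = ∑ i ∈ range (j+1), ∑ l ∈ range (j+1),
          coeff l f * coeff i (g2 ^ l) * coeff j (g1 ^ i) := by
        refine Finset.sum_congr rfl fun i hi => ?_
        rw [Finset.mem_range] at hi
        rw [coeff_psSubst, Finset.sum_mul]
        apply Finset.sum_subset
        · intro a ha; rw [Finset.mem_range] at *; omega
        · intro l _ hl
          rw [Finset.mem_range, not_lt] at hl
          rw [coeff_pow_eq_zero h2 (show i < l by omega), mul_zero, zero_mul]
      _ = ∑ l ∈ range (j+1), coeff l f * coeff j ((psSubst g1 g2) ^ l) := by
        rw [Finset.sum_comm]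
        refine Finset.sum_congr rfl fun l _ => ?_
        rw [← psSubst_pow h1, coeff_psSubst, Finset.mul_sum]
        refine Finset.sum_congr rfl fun i _ => by ring

lemma constantCoeff_psSubst (g f : PowerSeries A) :
    constantCoeff (psSubst g f) = constantCoeff f := by
  rw [← coeff_zero_eq_constantCoeff, coeff_psSubst]
  simp

lemma coeff_psSubst_eq_zero {f : PowerSeries A} {i : ℕ}
    (hf : ∀ l < i, coeff l f = 0) (g : PowerSeries A) {j : ℕ} (hj : j < i) :
    coeff j (psSubst g f) = 0 := by
  rw [coeff_psSubst]
  apply Finset.sum_eq_zero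
  intro l hl
  rw [Finset.mem_range] at hl
  rw [hf l (by omega), zero_mul]

lemma coeff_psSubst_high {g f : PowerSeries A} (hg : constantCoeff g = 0) {i : ℕ}
    (hf : ∀ l < i, coeff l f = 0) :
    coeff i (psSubst g f) = coeff i f * (coeff 1 g) ^ i := by
  rw [coeff_psSubst, Finset.sum_eq_single i]
  · rw [coeff_self_pow hg]
  · intro l hl hne
    rw [Finset.mem_range] at hl
    rw [hf l (by omega), zero_mul]
  · intro h; exact absurd (Finset.mem_range.mpr (by omega)) h

end Aux2
namespace Aux3
open Aux Aux2
variable {p : ℕ} [Fact p.Prime]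

noncomputable def binomPoly (p : ℕ) [Fact p.Prime] (n : ℕ) : Polynomial ℚ_[p] :=
  (n.factorial : ℚ_[p])⁻¹ • descPochhammer ℚ_[p] n

lemma binomC_eval (c : ℤ_[p]) (n : ℕ) :
    binomC p c n = (binomPoly p n).eval (c : ℚ_[p]) := by
  simp only [binomC, binomPoly, Polynomial.eval_smul, smul_eq_mul]
  rw [div_eq_inv_mul]

lemma binomC_zero (c : ℤ_[p]) : binomC p c 0 = 1 := by
  simp [binomC, descPochhammer_zero]

lemma binomC_nat (m n : ℕ) : binomC p (m : ℤ_[p]) n = (m.choose n : ℚ_[p]) := by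
  rw [binomC, PadicInt.coe_natCast, descPochhammer_eval_eq_descFactorial,
    Nat.descFactorial_eq_factorial_mul_choose]
  have hfac : ((n.factorial : ℚ_[p])) ≠ 0 := by
    exact_mod_cast Nat.cast_ne_zero.mpr n.factorial_ne_zero
  push_cast
  field_simp

lemma coeff_one_add_X_pow (m n : ℕ) :
    coeff n ((1 + X : PowerSeries ℚ_[p]) ^ m) = (m.choose n : ℚ_[p]) := by
  rw [add_comm (1 : PowerSeries ℚ_[p]) X, add_pow, map_sum]
  have hterm : ∀ i, coeff n ((X:PowerSeries ℚ_[p]) ^ i * 1 ^ (m - i) * (m.choose i : PowerSeries ℚ_[p]))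
      = if n = i then (m.choose i : ℚ_[p]) else 0 := by
    intro i
    rw [one_pow, mul_one, ← map_natCast (C (R := ℚ_[p])) (m.choose i), coeff_mul_C, coeff_X_pow]
    split_ifs <;> simp
  rw [Finset.sum_congr rfl fun i _ => hterm i]
  by_cases hnm : n ≤ m
  · rw [Finset.sum_ite_eq (range (m+1)) n (fun i => (m.choose i : ℚ_[p]))]
    simp [Nat.lt_succ_iff.mpr hnm]
  · push_neg at hnm
    rw [Finset.sum_eq_zero, Nat.choose_eq_zero_of_lt hnm, Nat.cast_zero]
    intro i hi
    rw [Finset.mem_range] at hi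
    rw [if_neg (by omega)]

lemma onePlusPiPow_nat (m : ℕ) :
    onePlusPiPow p (m : ℤ_[p]) = (1 + X : PowerSeries ℚ_[p]) ^ m := by
  ext n
  rw [coeff_one_add_X_pow, onePlusPiPow, coeff_mk, binomC_nat]

lemma constantCoeff_op (c : ℤ_[p]) :
    constantCoeff (onePlusPiPow p c) = 1 := by
  rw [← coeff_zero_eq_constantCoeff, onePlusPiPow, coeff_mk, binomC_zero]

lemma gSer_const (c : ℤ_[p]) :
    constantCoeff (onePlusPiPow p c - 1) = 0 := by
  rw [map_sub, constantCoeff_op, map_one, sub_self]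

lemma poly_eq_of_nat (P Q : Polynomial ℚ_[p])
    (h : ∀ m : ℕ, P.eval (m : ℚ_[p]) = Q.eval (m : ℚ_[p])) : P = Q := by
  apply Polynomial.eq_of_infinite_eval_eq
  apply Set.infinite_of_injective_forall_mem (f := fun m : ℕ => (m : ℚ_[p]))
  · exact Nat.cast_injective
  · intro m; exact h m

def PolyFam (F : ℤ_[p] → PowerSeries ℚ_[p]) : Prop :=
  ∀ n : ℕ, ∃ P : Polynomial ℚ_[p], ∀ c : ℤ_[p],
    coeff n (F c) = P.eval (c : ℚ_[p])

lemma PolyFam.congr {F G : ℤ_[p] → PowerSeries ℚ_[p]} (hF : PolyFam F)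
    (h : ∀ c, F c = G c) : PolyFam G := by
  intro n
  obtain ⟨P, hP⟩ := hF n
  exact ⟨P, fun c => (h c) ▸ hP c⟩

lemma ext_from_nat {F G : ℤ_[p] → PowerSeries ℚ_[p]} (hF : PolyFam F) (hG : PolyFam G)
    (h : ∀ m : ℕ, F (m : ℤ_[p]) = G (m : ℤ_[p])) : ∀ c, F c = G c := by
  intro c
  ext n
  obtain ⟨P, hP⟩ := hF n
  obtain ⟨Q, hQ⟩ := hG n
  rw [hP, hQ]
  have : P = Q := by
    apply poly_eq_of_nat
    intro m
    have := congrArg (coeff n) (h m)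
    rw [hP, hQ, PadicInt.coe_natCast] at this
    exact this
  rw [this]

lemma pf_op : PolyFam (fun c : ℤ_[p] => onePlusPiPow p c) := by
  intro n
  exact ⟨binomPoly p n, fun c => by simp only [onePlusPiPow, coeff_mk]; rw [binomC_eval]⟩

lemma pf_affine (a b : ℤ_[p]) : PolyFam (fun c : ℤ_[p] => onePlusPiPow p (a * c + b)) := by
  intro n
  refine ⟨(binomPoly p n).comp (Polynomial.C (a : ℚ_[p]) * Polynomial.X + Polynomial.C (b : ℚ_[p])),
    fun c => ?_⟩
  simp only [onePlusPiPow, coeff_mk]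
  rw [binomC_eval, Polynomial.eval_comp]
  push_cast
  simp

lemma pf_mul_right (u : PowerSeries ℚ_[p]) :
    PolyFam (fun c : ℤ_[p] => onePlusPiPow p c * u) := by
  intro n
  refine ⟨∑ P ∈ antidiagonal n, binomPoly p P.1 * Polynomial.C (coeff P.2 u),
    fun c => ?_⟩
  rw [coeff_mul, Polynomial.eval_finset_sum]
  refine Finset.sum_congr rfl fun P _ => ?_
  rw [Polynomial.eval_mul, Polynomial.eval_C, onePlusPiPow, coeff_mk, binomC_eval]

lemma pf_mul_left (u : PowerSeries ℚ_[p]) :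
    PolyFam (fun c : ℤ_[p] => u * onePlusPiPow p c) :=
  (pf_mul_right u).congr fun c => mul_comm _ _

lemma pf_subst (g : PowerSeries ℚ_[p]) :
    PolyFam (fun c : ℤ_[p] => psSubst g (onePlusPiPow p c)) := by
  intro n
  refine ⟨∑ i ∈ range (n+1), binomPoly p i * Polynomial.C (coeff n (g ^ i)),
    fun c => ?_⟩
  rw [coeff_psSubst, Polynomial.eval_finset_sum]
  refine Finset.sum_congr rfl fun i _ => ?_
  rw [Polynomial.eval_mul, Polynomial.eval_C, onePlusPiPow, coeff_mk, binomC_eval]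

lemma op_add (c d : ℤ_[p]) :
    onePlusPiPow p c * onePlusPiPow p d = onePlusPiPow p (c + d) := by
  have base : ∀ l m : ℕ, onePlusPiPow p (l : ℤ_[p]) * onePlusPiPow p (m : ℤ_[p])
      = onePlusPiPow p ((l : ℤ_[p]) + (m : ℤ_[p])) := by
    intro l m
    have : ((l : ℤ_[p]) + (m : ℤ_[p])) = ((l + m : ℕ) : ℤ_[p]) := by push_cast; ring
    rw [this, onePlusPiPow_nat, onePlusPiPow_nat, onePlusPiPow_nat, pow_add]
  have stepA : ∀ (m : ℕ) (c : ℤ_[p]), onePlusPiPow p c * onePlusPiPow p (m : ℤ_[p])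
      = onePlusPiPow p (c + (m : ℤ_[p])) := by
    intro m
    apply ext_from_nat (pf_mul_right _)
      ((pf_affine 1 (m : ℤ_[p])).congr fun c => by rw [one_mul])
    intro l
    exact base l m
  apply ext_from_nat (F := fun d => onePlusPiPow p c * onePlusPiPow p d)
    (G := fun d => onePlusPiPow p (c + d)) (pf_mul_left _)
    ((pf_affine 1 c).congr fun d => by rw [one_mul, add_comm])
  intro m
  exact stepA m c

lemma op_zero : onePlusPiPow p (0 : ℤ_[p]) = 1 := by
  have : ((0 : ℕ) : ℤ_[p]) = 0 := by push_cast; ring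
  rw [← this, onePlusPiPow_nat, pow_zero]

lemma op_pow_nat (c : ℤ_[p]) (e : ℕ) :
    (onePlusPiPow p c) ^ e = onePlusPiPow p (c * (e : ℤ_[p])) := by
  induction e with
  | zero => simp [op_zero]
  | succ e ih =>
    rw [pow_succ, ih, op_add]
    congr 1
    push_cast
    ring

lemma psSubst_op (c d : ℤ_[p]) :
    psSubst (onePlusPiPow p c - 1) (onePlusPiPow p d) = onePlusPiPow p (c * d) := by
  have hg : constantCoeff (onePlusPiPow p c - 1) = 0 := gSer_const c
  have base : ∀ e : ℕ, psSubst (onePlusPiPow p c - 1) (onePlusPiPow p (e : ℤ_[p]))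
      = onePlusPiPow p (c * (e : ℤ_[p])) := by
    intro e
    rw [onePlusPiPow_nat, ← op_pow_nat]
    rw [psSubst_pow hg, psSubst_add, psSubst_one, psSubst_X hg]
    ring_nf
  apply ext_from_nat (F := fun d => psSubst (onePlusPiPow p c - 1) (onePlusPiPow p d))
    (G := fun d => onePlusPiPow p (c * d)) (pf_subst _)
    ((pf_affine c 0).congr fun d => by rw [add_zero])
  exact base

end Aux3
namespace Aux4
open Aux Aux2 Aux3
variable {p : ℕ} [Fact p.Prime]

lemma psSubst_sub {A : Type*} [CommRing A] (g f1 f2 : PowerSeries A) :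
    psSubst g (f1 - f2) = psSubst g f1 - psSubst g f2 := by
  ext j
  simp [coeff_psSubst, sub_mul, Finset.sum_sub_distrib]

lemma psSubst_zero {A : Type*} [CommRing A] (g : PowerSeries A) :
    psSubst g 0 = 0 := by
  have := psSubst_C g (0 : A)
  simpa using this

lemma phiA_eq_gamma : phiA p ℚ_[p] = gammaQ p ((p : ℕ) : ℤ_[p]) := by
  unfold phiA gammaQ
  rw [onePlusPiPow_nat]

lemma gamma_comp (c d : ℤ_[p]) (f : PowerSeries ℚ_[p]) :
    gammaQ p c (gammaQ p d f) = gammaQ p (c * d) f := by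
  unfold gammaQ
  rw [psSubst_comp (gSer_const c) (gSer_const d),
    psSubst_sub, psSubst_one, psSubst_op]

lemma phi_gamma_comm (c : ℤ_[p]) (f : PowerSeries ℚ_[p]) :
    phiA p ℚ_[p] (gammaQ p c f) = gammaQ p c (phiA p ℚ_[p] f) := by
  rw [phiA_eq_gamma, gamma_comp, gamma_comp, mul_comm]

lemma constantCoeff_gammaQ (c : ℤ_[p]) (f : PowerSeries ℚ_[p]) :
    constantCoeff (gammaQ p c f) = constantCoeff f :=
  constantCoeff_psSubst _ _

lemma phig_const : constantCoeff ((1 + PowerSeries.X : PowerSeries ℚ_[p]) ^ p - 1) = 0 := by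
  rw [map_sub, map_pow, map_add, map_one, constantCoeff_X, add_zero, one_pow, sub_self]

lemma phig_coeff_one : coeff 1 ((1 + PowerSeries.X) ^ p - 1) = (p : ℚ_[p]) := by
  rw [map_sub, coeff_one_add_X_pow, Nat.choose_one_right]
  simp

lemma coeff_phi_high {f : PowerSeries ℚ_[p]} {i : ℕ}
    (hf : ∀ l < i, coeff l f = 0) :
    coeff i (phiA p ℚ_[p] f) = (p : ℚ_[p]) ^ i * coeff i f := by
  unfold phiA
  rw [coeff_psSubst_high phig_const hf, phig_coeff_one, mul_comm]

lemma coeff_phi_low {f : PowerSeries ℚ_[p]} {i : ℕ}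
    (hf : ∀ l < i, coeff l f = 0) {j : ℕ} (hj : j < i) :
    coeff j (phiA p ℚ_[p] f) = 0 :=
  coeff_psSubst_eq_zero hf _ hj

/-- `gammaQ` as a ring hom. -/
noncomputable def gammaHom (c : ℤ_[p]) : PowerSeries ℚ_[p] →+* PowerSeries ℚ_[p] where
  toFun := gammaQ p c
  map_one' := psSubst_one _
  map_mul' := psSubst_mul (gSer_const c)
  map_zero' := psSubst_zero _
  map_add' := psSubst_add _

lemma gammaHom_apply (c : ℤ_[p]) (f : PowerSeries ℚ_[p]) :
    gammaHom c f = gammaQ p c f := rfl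

/-- `gamma2` as a ring hom. -/
noncomputable def gamma2Hom (c : ℤ_[p]) : PS2 p →+* PS2 p := PowerSeries.map (gammaHom c)

lemma gamma2_eq (c : ℤ_[p]) : gamma2 p c = ⇑(gamma2Hom (p := p) c) := by
  funext F
  ext n
  rw [gamma2Hom, PowerSeries.coeff_map]
  simp only [gamma2, coeff_mk]
  rfl

lemma phi2_eq : phi2 p = ⇑(gamma2Hom (p := p) ((p : ℕ) : ℤ_[p])) := by
  funext F
  ext n
  rw [gamma2Hom, PowerSeries.coeff_map]
  simp only [phi2, coeff_mk, phiA_eq_gamma]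
  rfl

lemma coeff_phi2 (F : PS2 p) (n : ℕ) :
    coeff n (phi2 p F) =
      phiA p ℚ_[p] (coeff n F) := by
  simp [phi2]

lemma coeff_gamma2 (c : ℤ_[p]) (F : PS2 p) (n : ℕ) :
    coeff n (gamma2 p c F) =
      gammaQ p c (coeff n F) := by
  simp [gamma2]

lemma gamma2_comp (c d : ℤ_[p]) (F : PS2 p) :
    gamma2 p c (gamma2 p d F) = gamma2 p (c * d) F := by
  ext n
  rw [coeff_gamma2, coeff_gamma2, coeff_gamma2, gamma_comp]

lemma phi2_gamma2_comm (c : ℤ_[p]) (F : PS2 p) :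
    phi2 p (gamma2 p c F) = gamma2 p c (phi2 p F) := by
  ext n
  rw [coeff_phi2, coeff_gamma2, coeff_gamma2, coeff_phi2, phi_gamma_comm]

end Aux4
namespace Aux5
open Aux Aux2 Aux3 Aux4
variable {p : ℕ} [Fact p.Prime]

lemma coeff_mul_right_low {A : Type*} [CommRing A] {f : PowerSeries A} {i : ℕ}
    (hf : ∀ l < i, coeff l f = 0) (w : PowerSeries A) :
    coeff i (f * w) = coeff i f * constantCoeff w := by
  rw [coeff_mul, Finset.sum_eq_single (i, 0)]
  · rw [coeff_zero_eq_constantCoeff]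
  · rintro ⟨x, y⟩ hxy hne
    rw [Finset.HasAntidiagonal.mem_antidiagonal] at hxy
    have hx : x < i := by
      rcases lt_or_ge x i with h | h
      · exact h
      · exfalso; apply hne; have : x = i := by omega
        subst this; have : y = 0 := by omega
        subst this; rfl
    rw [hf x hx, zero_mul]
  · intro h; exact absurd (Finset.HasAntidiagonal.mem_antidiagonal.mpr (by omega)) h

lemma coeff_mul_left_low {A : Type*} [CommRing A] {f : PowerSeries A} {i : ℕ}
    (hf : ∀ l < i, coeff l f = 0) (w : PowerSeries A) :
    coeff i (w * f) = constantCoeff w * coeff i f := by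
  rw [mul_comm, coeff_mul_right_low hf, mul_comm]

lemma gammaQ_zero (c : ℤ_[p]) : gammaQ p c 0 = 0 := psSubst_zero _

lemma gamma2_zero (c : ℤ_[p]) : gamma2 p c 0 = 0 := by
  rw [gamma2_eq]; exact map_zero (gamma2Hom (p := p) c)

lemma gamma2_neg_one (c : ℤ_[p]) : gamma2 p c (-1) = -1 := by
  rw [gamma2_eq]
  exact (map_neg (gamma2Hom (p := p) c) 1).trans (by rw [map_one])

lemma gamma2_C (c : ℤ_[p]) (w : PowerSeries ℚ_[p]) :
    gamma2 p c (PowerSeries.C w) =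
      PowerSeries.C (gammaQ p c w) := by
  refine PowerSeries.ext fun n => ?_
  rw [coeff_gamma2, coeff_C, coeff_C]
  split_ifs
  · rfl
  · exact gammaQ_zero c

lemma gamma2_XC (c : ℤ_[p]) (w : PowerSeries ℚ_[p]) :
    gamma2 p c (PowerSeries.X * PowerSeries.C w) =
      PowerSeries.X * PowerSeries.C (gammaQ p c w) := by
  refine PowerSeries.ext fun n => ?_
  rw [coeff_gamma2]
  cases n with
  | zero => rw [coeff_zero_X_mul, coeff_zero_X_mul]; exact gammaQ_zero c
  | succ n =>
    rw [coeff_succ_X_mul, coeff_succ_X_mul, coeff_C, coeff_C]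
    split_ifs
    · rfl
    · exact gammaQ_zero c

lemma coeff2_mul_XC_zero (F : PS2 p) (w : PowerSeries ℚ_[p]) :
    coeff 0 (F * (PowerSeries.X * PowerSeries.C w)) = 0 := by
  rw [show F * (PowerSeries.X * PowerSeries.C w)
    = PowerSeries.X * (F * PowerSeries.C w) by ring, coeff_zero_X_mul]

lemma coeff2_mul_XC_succ (F : PS2 p) (w : PowerSeries ℚ_[p]) (j : ℕ) :
    coeff (j+1) (F * (PowerSeries.X * PowerSeries.C w))
      = coeff j F * w := by
  rw [show F * (PowerSeries.X * PowerSeries.C w)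
    = PowerSeries.X * (F * PowerSeries.C w) by ring, coeff_succ_X_mul,
    coeff_mul_C]

lemma coeff2_XC_mul_zero (F : PS2 p) (w : PowerSeries ℚ_[p]) :
    coeff 0 (PowerSeries.X * PowerSeries.C w * F) = 0 := by
  rw [mul_assoc, coeff_zero_X_mul]

lemma coeff2_XC_mul_succ (F : PS2 p) (w : PowerSeries ℚ_[p]) (j : ℕ) :
    coeff (j+1) (PowerSeries.X * PowerSeries.C w * F)
      = w * coeff j F := by
  rw [mul_assoc, coeff_succ_X_mul, coeff_C_mul]

lemma scalar_solve {Qc κ A B Cc Dd : ℚ_[p]} (hQc : Qc ≠ 0) (hκ : κ * κ ≠ 1)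
    (s1 : -(κ * Cc) = B * Qc)
    (s2 : -(κ * Dd) = -A)
    (s3 : Qc * (κ * A) = Dd * Qc)
    (s4 : Qc * (κ * B) = -Cc) :
    A = 0 ∧ B = 0 ∧ Cc = 0 ∧ Dd = 0 := by
  have hA : A = κ * Dd := by linear_combination s2
  have h3 : κ * A = Dd := by
    have : (κ * A) * Qc = Dd * Qc := by linear_combination s3
    exact mul_right_cancel₀ hQc this
  have hDd : Dd = 0 := by
    have : (κ * κ - 1) * Dd = 0 := by linear_combination h3 - κ * hA
    rcases mul_eq_zero.mp this with h | h
    · exact absurd (by linear_combination h) hκ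
    · exact h
  have hA0 : A = 0 := by rw [hA, hDd, mul_zero]
  have hB : B = 0 := by
    have : (κ * κ - 1) * (Qc * B) = 0 := by linear_combination κ * s4 + s1
    rcases mul_eq_zero.mp this with h | h
    · exact absurd (by linear_combination h) hκ
    · rcases mul_eq_zero.mp h with h' | h'
      · exact absurd h' hQc
      · exact h'
  have hCc : Cc = 0 := by
    have := s4
    rw [hB, mul_zero, mul_zero] at this
    linear_combination this
  exact ⟨hA0, hB, hCc, hDd⟩

end Aux5
namespace Aux6
open Aux Aux2 Aux3 Aux4 Aux5
variable {p : ℕ} [Fact p.Prime]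

lemma D_eq_zero (k : ℕ) (q z : PowerSeries ℚ_[p])
    (hq0 : constantCoeff q = (p : ℚ_[p])) (ee : ℤ_[p])
    (D : Matrix (Fin 2) (Fin 2) (PS2 p))
    (heq : Pmat p k q z * D.map (phi2 p) = D * (Pmat p k q z).map (gamma2 p ee))
    (h0 : ∀ r s, PowerSeries.map (constantCoeff : PowerSeries ℚ_[p] →+* ℚ_[p]) (D r s) = 0) : D = 0 := by
  classical
  set q' : PowerSeries ℚ_[p] := q ^ (k - 1) with hq'
  set a : ℕ → PowerSeries ℚ_[p] := fun j => coeff j (D 0 0) with ha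
  set b : ℕ → PowerSeries ℚ_[p] := fun j => coeff j (D 0 1) with hb
  set cc : ℕ → PowerSeries ℚ_[p] := fun j => coeff j (D 1 0) with hcc
  set dd : ℕ → PowerSeries ℚ_[p] := fun j => coeff j (D 1 1) with hdd
  have hent : ∀ r s, (Pmat p k q z * D.map (phi2 p)) r s
      = (D * (Pmat p k q z).map (gamma2 p ee)) r s := fun r s => by rw [heq]
  have E1 : -(phi2 p (D 1 0)) = D 0 1 * PowerSeries.C (gammaQ p ee q') := by
    have h := hent 0 0
    simp only [Matrix.mul_apply, Fin.sum_univ_two, Matrix.map_apply, Pmat, Matrix.cons_val',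
      Matrix.cons_val_zero, Matrix.empty_val', Matrix.cons_val_fin_one, Matrix.cons_val_one,
      Matrix.head_cons, Matrix.head_fin_const, Matrix.of_apply, gamma2_zero, gamma2_C, gamma2_XC,
      gamma2_neg_one, zero_mul, mul_zero, zero_add, add_zero, neg_one_mul, mul_neg_one] at h
    exact h
  have E2 : -(phi2 p (D 1 1)) = -(D 0 0) + D 0 1 *
      (PowerSeries.X * PowerSeries.C (gammaQ p ee z)) := by
    have h := hent 0 1
    simp only [Matrix.mul_apply, Fin.sum_univ_two, Matrix.map_apply, Pmat, Matrix.cons_val',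
      Matrix.cons_val_zero, Matrix.empty_val', Matrix.cons_val_fin_one, Matrix.cons_val_one,
      Matrix.head_cons, Matrix.head_fin_const, Matrix.of_apply, gamma2_zero, gamma2_C, gamma2_XC,
      gamma2_neg_one, zero_mul, mul_zero, zero_add, add_zero, neg_one_mul, mul_neg_one] at h
    exact h
  have E3 : PowerSeries.C q' * phi2 p (D 0 0) +
      PowerSeries.X * PowerSeries.C z * phi2 p (D 1 0)
      = D 1 1 * PowerSeries.C (gammaQ p ee q') := by
    have h := hent 1 0
    simp only [Matrix.mul_apply, Fin.sum_univ_two, Matrix.map_apply, Pmat, Matrix.cons_val',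
      Matrix.cons_val_zero, Matrix.empty_val', Matrix.cons_val_fin_one, Matrix.cons_val_one,
      Matrix.head_cons, Matrix.head_fin_const, Matrix.of_apply, gamma2_zero, gamma2_C, gamma2_XC,
      gamma2_neg_one, zero_mul, mul_zero, zero_add, add_zero, neg_one_mul, mul_neg_one] at h
    exact h
  have E4 : PowerSeries.C q' * phi2 p (D 0 1) +
      PowerSeries.X * PowerSeries.C z * phi2 p (D 1 1)
      = -(D 1 0) + D 1 1 *
        (PowerSeries.X * PowerSeries.C (gammaQ p ee z)) := by
    have h := hent 1 1
    simp only [Matrix.mul_apply, Fin.sum_univ_two, Matrix.map_apply, Pmat, Matrix.cons_val',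
      Matrix.cons_val_zero, Matrix.empty_val', Matrix.cons_val_fin_one, Matrix.cons_val_one,
      Matrix.head_cons, Matrix.head_fin_const, Matrix.of_apply, gamma2_zero, gamma2_C, gamma2_XC,
      gamma2_neg_one, zero_mul, mul_zero, zero_add, add_zero, neg_one_mul, mul_neg_one] at h
    exact h
  have F1 : ∀ j, -(phiA p ℚ_[p] (cc j)) = b j * gammaQ p ee q' := by
    intro j
    have h := congrArg (coeff j) E1
    rwa [map_neg, coeff_phi2, coeff_mul_C] at h
  have F2z : -(phiA p ℚ_[p] (dd 0)) = -(a 0) := by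
    have h := congrArg (coeff 0) E2
    rwa [map_neg, coeff_phi2, map_add, map_neg, coeff2_mul_XC_zero, add_zero] at h
  have F2s : ∀ j, -(phiA p ℚ_[p] (dd (j+1))) = -(a (j+1)) + b j * gammaQ p ee z := by
    intro j
    have h := congrArg (coeff (j+1)) E2
    rwa [map_neg, coeff_phi2, map_add, map_neg, coeff2_mul_XC_succ] at h
  have F3z : q' * phiA p ℚ_[p] (a 0) = dd 0 * gammaQ p ee q' := by
    have h := congrArg (coeff 0) E3
    rwa [map_add, coeff_C_mul, coeff_phi2, coeff2_XC_mul_zero, add_zero, coeff_mul_C] at h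
  have F3s : ∀ j, q' * phiA p ℚ_[p] (a (j+1)) + z * phiA p ℚ_[p] (cc j)
      = dd (j+1) * gammaQ p ee q' := by
    intro j
    have h := congrArg (coeff (j+1)) E3
    rwa [map_add, coeff_C_mul, coeff_phi2, coeff2_XC_mul_succ, coeff_phi2, coeff_mul_C] at h
  have F4z : q' * phiA p ℚ_[p] (b 0) = -(cc 0) := by
    have h := congrArg (coeff 0) E4
    rwa [map_add, coeff_C_mul, coeff_phi2, coeff2_XC_mul_zero, add_zero, map_add, map_neg,
      coeff2_mul_XC_zero, add_zero] at h
  have F4s : ∀ j, q' * phiA p ℚ_[p] (b (j+1)) + z * phiA p ℚ_[p] (dd j)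
      = -(cc (j+1)) + dd j * gammaQ p ee z := by
    intro j
    have h := congrArg (coeff (j+1)) E4
    rwa [map_add, coeff_C_mul, coeff_phi2, coeff2_XC_mul_succ, coeff_phi2, map_add, map_neg,
      coeff2_mul_XC_succ] at h
  have hQc0 : constantCoeff q' = (p : ℚ_[p]) ^ (k - 1) := by
    rw [hq', map_pow, hq0]
  have hγq' : constantCoeff (gammaQ p ee q') = (p : ℚ_[p]) ^ (k - 1) := by
    rw [constantCoeff_gammaQ, hQc0]
  have hγz : constantCoeff (gammaQ p ee z) = constantCoeff z :=
    constantCoeff_gammaQ _ _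
  have hpne : (p : ℚ_[p]) ≠ 0 := Nat.cast_ne_zero.mpr (Fact.out : p.Prime).ne_zero
  have hQcne : (p : ℚ_[p]) ^ (k - 1) ≠ 0 := pow_ne_zero _ hpne
  have key : ∀ i : ℕ, ∀ j : ℕ,
      coeff i (a j) = 0 ∧ coeff i (b j) = 0 ∧
      coeff i (cc j) = 0 ∧ coeff i (dd j) = 0 := by
    intro i
    induction i using Nat.strong_induction_on with
    | _ i IH =>
      rcases Nat.eq_zero_or_pos i with hi0 | hip
      · subst hi0
        intro j
        have base : ∀ r s, coeff 0 (coeff j (D r s)) = 0 := by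
          intro r s
          have h := congrArg (coeff j) (h0 r s)
          rw [PowerSeries.coeff_map, map_zero] at h
          rw [coeff_zero_eq_constantCoeff]
          exact h
        exact ⟨base 0 0, base 0 1, base 1 0, base 1 1⟩
      · have hlowa : ∀ j, ∀ l < i, coeff l (a j) = 0 := fun j l hl => (IH l hl j).1
        have hlowb : ∀ j, ∀ l < i, coeff l (b j) = 0 := fun j l hl => (IH l hl j).2.1
        have hlowc : ∀ j, ∀ l < i, coeff l (cc j) = 0 := fun j l hl => (IH l hl j).2.2.1
        have hlowd : ∀ j, ∀ l < i, coeff l (dd j) = 0 := fun j l hl => (IH l hl j).2.2.2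
        have hκκ : (p : ℚ_[p]) ^ i * (p : ℚ_[p]) ^ i ≠ 1 := by
          intro hcon
          have hnorm : ‖(p : ℚ_[p]) ^ i * (p : ℚ_[p]) ^ i‖ < 1 := by
            rw [← pow_add, norm_pow, Padic.norm_p]
            apply pow_lt_one₀ (by positivity)
            · rw [inv_lt_one_iff₀]
              right
              exact_mod_cast (Fact.out : p.Prime).one_lt
            · omega
          rw [hcon, norm_one] at hnorm
          exact lt_irrefl _ hnorm
        intro j
        induction j with
        | zero =>
          have s1 : -((p : ℚ_[p]) ^ i * coeff i (cc 0))
              = coeff i (b 0) * (p : ℚ_[p]) ^ (k - 1) := by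
            have h := congrArg (coeff i) (F1 0)
            rwa [map_neg, coeff_phi_high (hlowc 0), coeff_mul_right_low (hlowb 0), hγq'] at h
          have s2 : -((p : ℚ_[p]) ^ i * coeff i (dd 0)) = -(coeff i (a 0)) := by
            have h := congrArg (coeff i) F2z
            rwa [map_neg, map_neg, coeff_phi_high (hlowd 0)] at h
          have s3 : (p : ℚ_[p]) ^ (k - 1) * ((p : ℚ_[p]) ^ i * coeff i (a 0))
              = coeff i (dd 0) * (p : ℚ_[p]) ^ (k - 1) := by
            have h := congrArg (coeff i) F3z
            rwa [coeff_mul_left_low (fun l hl => coeff_phi_low (hlowa 0) hl),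
              coeff_phi_high (hlowa 0), hQc0, coeff_mul_right_low (hlowd 0), hγq'] at h
          have s4 : (p : ℚ_[p]) ^ (k - 1) * ((p : ℚ_[p]) ^ i * coeff i (b 0))
              = -(coeff i (cc 0)) := by
            have h := congrArg (coeff i) F4z
            rwa [coeff_mul_left_low (fun l hl => coeff_phi_low (hlowb 0) hl),
              coeff_phi_high (hlowb 0), hQc0, map_neg] at h
          exact scalar_solve hQcne hκκ s1 s2 s3 s4
        | succ j hj =>
          obtain ⟨hja, hjb, hjc, hjd⟩ := hj
          have s1 : -((p : ℚ_[p]) ^ i * coeff i (cc (j+1)))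
              = coeff i (b (j+1)) * (p : ℚ_[p]) ^ (k - 1) := by
            have h := congrArg (coeff i) (F1 (j+1))
            rwa [map_neg, coeff_phi_high (hlowc (j+1)), coeff_mul_right_low (hlowb (j+1)),
              hγq'] at h
          have s2 : -((p : ℚ_[p]) ^ i * coeff i (dd (j+1)))
              = -(coeff i (a (j+1))) := by
            have h := congrArg (coeff i) (F2s j)
            rwa [map_neg, map_add, map_neg, coeff_phi_high (hlowd (j+1)),
              coeff_mul_right_low (hlowb j), hjb, zero_mul, add_zero] at h
          have s3 : (p : ℚ_[p]) ^ (k - 1) * ((p : ℚ_[p]) ^ i * coeff i (a (j+1)))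
              = coeff i (dd (j+1)) * (p : ℚ_[p]) ^ (k - 1) := by
            have h := congrArg (coeff i) (F3s j)
            rwa [map_add, coeff_mul_left_low (fun l hl => coeff_phi_low (hlowa (j+1)) hl),
              coeff_phi_high (hlowa (j+1)), hQc0,
              coeff_mul_left_low (fun l hl => coeff_phi_low (hlowc j) hl),
              coeff_phi_high (hlowc j), hjc, mul_zero, mul_zero, add_zero,
              coeff_mul_right_low (hlowd (j+1)), hγq'] at h
          have s4 : (p : ℚ_[p]) ^ (k - 1) * ((p : ℚ_[p]) ^ i * coeff i (b (j+1)))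
              = -(coeff i (cc (j+1))) := by
            have h := congrArg (coeff i) (F4s j)
            rwa [map_add, coeff_mul_left_low (fun l hl => coeff_phi_low (hlowb (j+1)) hl),
              coeff_phi_high (hlowb (j+1)), hQc0,
              coeff_mul_left_low (fun l hl => coeff_phi_low (hlowd j) hl),
              coeff_phi_high (hlowd j), hjd, mul_zero, mul_zero, add_zero,
              map_add, map_neg, coeff_mul_right_low (hlowd j), hjd, zero_mul, add_zero] at h
          exact scalar_solve hQcne hκκ s1 s2 s3 s4
  have hentry : ∀ r s, D r s = 0 := by
    intro r s
    refine PowerSeries.ext fun j => ?_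
    refine PowerSeries.ext fun i => ?_
    rw [map_zero, map_zero]
    fin_cases r <;> fin_cases s
    · exact (key i j).1
    · exact (key i j).2.1
    · exact (key i j).2.2.1
    · exact (key i j).2.2.2
  ext r s
  rw [hentry r s, Matrix.zero_apply]

end Aux6
namespace Aux7
open Aux Aux2 Aux3 Aux4 Aux5 Aux6
variable {p : ℕ} [Fact p.Prime]

/-- The reduction mod π as a ring hom on `PS2`. -/
noncomputable def redHom : PS2 p →+* PowerSeries ℚ_[p] :=
  PowerSeries.map (constantCoeff : PowerSeries ℚ_[p] →+* ℚ_[p])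

lemma redHom_gamma2 (e : ℤ_[p]) (F : PS2 p) :
    redHom (gamma2 p e F) = redHom (p := p) F := by
  refine PowerSeries.ext fun n => ?_
  rw [redHom, PowerSeries.coeff_map, PowerSeries.coeff_map, coeff_gamma2, constantCoeff_gammaQ]

lemma redHom_modPiId {G : Matrix (Fin 2) (Fin 2) (PS2 p)} (hG : ModPiId p G) :
    G.map (redHom (p := p)) = 1 := by
  obtain ⟨H', -, hG'⟩ := hG
  subst hG'
  ext r s
  rw [Matrix.map_apply, Matrix.add_apply, Matrix.smul_apply, smul_eq_mul, map_add, map_mul]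
  have hpi : redHom (piVar p) = 0 := by
    rw [piVar, redHom, PowerSeries.map_C, constantCoeff_X, map_zero]
  rw [hpi, zero_mul, add_zero]
  rcases eq_or_ne r s with h | h
  · subst h; rw [Matrix.one_apply_eq, Matrix.one_apply_eq, map_one]
  · rw [Matrix.one_apply_ne h, Matrix.one_apply_ne h, map_zero]

lemma map_mul_gamma2 (e : ℤ_[p]) (M N : Matrix (Fin 2) (Fin 2) (PS2 p)) :
    (M * N).map (gamma2 p e) = M.map (gamma2 p e) * N.map (gamma2 p e) := by
  rw [gamma2_eq]
  exact Matrix.map_mul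

lemma map_mul_phi2 (M N : Matrix (Fin 2) (Fin 2) (PS2 p)) :
    (M * N).map (phi2 p) = M.map (phi2 p) * N.map (phi2 p) := by
  rw [phi2_eq]
  exact Matrix.map_mul

lemma map_sub_phi2 (M N : Matrix (Fin 2) (Fin 2) (PS2 p)) :
    (M - N).map (phi2 p) = M.map (phi2 p) - N.map (phi2 p) := by
  rw [phi2_eq, ← RingHom.mapMatrix_apply, ← RingHom.mapMatrix_apply, ← RingHom.mapMatrix_apply,
    map_sub]

lemma map_map_phi2_gamma2 (e : ℤ_[p]) (M : Matrix (Fin 2) (Fin 2) (PS2 p)) :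
    (M.map (gamma2 p e)).map (phi2 p) = (M.map (phi2 p)).map (gamma2 p e) := by
  have hfun : (phi2 p ∘ gamma2 p e) = (gamma2 p e ∘ phi2 p) :=
    funext fun F => phi2_gamma2_comm e F
  rw [Matrix.map_map, Matrix.map_map, hfun]

lemma map_map_gamma2_gamma2 (e e' : ℤ_[p]) (M : Matrix (Fin 2) (Fin 2) (PS2 p)) :
    (M.map (gamma2 p e')).map (gamma2 p e) = M.map (gamma2 p (e * e')) := by
  have hfun : (gamma2 p e ∘ gamma2 p e') = gamma2 p (e * e') :=
    funext fun F => gamma2_comp e e' F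
  rw [Matrix.map_map, hfun]

lemma map_map_red_gamma2 (e : ℤ_[p]) (M : Matrix (Fin 2) (Fin 2) (PS2 p)) :
    (M.map (gamma2 p e)).map (redHom (p := p)) = M.map (redHom (p := p)) := by
  have hfun : (⇑(redHom (p := p)) ∘ gamma2 p e) = ⇑(redHom (p := p)) :=
    funext fun F => redHom_gamma2 e F
  rw [Matrix.map_map, hfun]

end Aux7

theorem statement14 (p : ℕ) [Fact p.Prime] (k : ℕ) (hk : 2 ≤ k)
    (q : PowerSeries ℚ_[p]) (hq : PowerSeries.X * q = (1 + PowerSeries.X) ^ p - 1)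
    (lamPlus lamMinus : PowerSeries ℚ_[p])
    (hplus : CoeffTendsto p (partialPlus p q) lamPlus)
    (hminus : CoeffTendsto p (partialMinus p q) lamMinus)
    (c d : ℤ_[p]ˣ)
    (Gc Gd Gcd : Matrix (Fin 2) (Fin 2) (PS2 p))
    (hGc : IsGmat p k q (zSeries p k lamPlus lamMinus) c Gc)
    (hGd : IsGmat p k q (zSeries p k lamPlus lamMinus) d Gd)
    (hGcd : IsGmat p k q (zSeries p k lamPlus lamMinus) (↑(c * d)) Gcd) :
    Gcd = Gc * Gd.map (gamma2 p c) := by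
  classical
  open Aux Aux2 Aux3 Aux4 Aux5 Aux6 Aux7 in
  obtain ⟨-, hmodc, heqc⟩ := hGc
  obtain ⟨-, hmodd, heqd⟩ := hGd
  obtain ⟨-, hmodcd, heqcd⟩ := hGcd
  set z : PowerSeries ℚ_[p] := zSeries p k lamPlus lamMinus with hz
  set P : Matrix (Fin 2) (Fin 2) (PS2 p) := Pmat p k q z with hP
  set H : Matrix (Fin 2) (Fin 2) (PS2 p) := Gc * Gd.map (gamma2 p (c : ℤ_[p])) with hH
  have hq0 : PowerSeries.constantCoeff q = (p : ℚ_[p]) := by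
    have h := congrArg (PowerSeries.coeff 1) hq
    rw [Aux4.phig_coeff_one] at h
    rw [← h, show (1 : ℕ) = 0 + 1 from rfl, PowerSeries.coeff_succ_X_mul,
      PowerSeries.coeff_zero_eq_constantCoeff]
  have hcd : ((↑(c * d) : ℤ_[p])) = (c : ℤ_[p]) * (d : ℤ_[p]) := Units.val_mul c d
  -- H satisfies the same functional equation as Gcd
  have hHeq : P * H.map (phi2 p) = H * P.map (gamma2 p ((↑(c * d) : ℤ_[p]))) := by
    calc P * H.map (phi2 p)
        = P * (Gc.map (phi2 p) * (Gd.map (phi2 p)).map (gamma2 p (c : ℤ_[p]))) := by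
          rw [hH, Aux7.map_mul_phi2, Aux7.map_map_phi2_gamma2]
      _ = (P * Gc.map (phi2 p)) * (Gd.map (phi2 p)).map (gamma2 p (c : ℤ_[p])) := by
          rw [mul_assoc]
      _ = Gc * (P.map (gamma2 p (c : ℤ_[p])) * (Gd.map (phi2 p)).map (gamma2 p (c : ℤ_[p]))) := by
          rw [heqc, mul_assoc]
      _ = Gc * ((P * Gd.map (phi2 p)).map (gamma2 p (c : ℤ_[p]))) := by
          rw [Aux7.map_mul_gamma2]
      _ = Gc * ((Gd * P.map (gamma2 p (d : ℤ_[p]))).map (gamma2 p (c : ℤ_[p]))) := by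
          rw [heqd]
      _ = Gc * (Gd.map (gamma2 p (c : ℤ_[p])) *
            (P.map (gamma2 p (d : ℤ_[p]))).map (gamma2 p (c : ℤ_[p]))) := by
          rw [Aux7.map_mul_gamma2]
      _ = H * P.map (gamma2 p ((↑(c * d) : ℤ_[p]))) := by
          rw [Aux7.map_map_gamma2_gamma2, hH, mul_assoc, hcd]
  -- the difference satisfies the homogeneous equation and vanishes mod π
  have hDeq : P * (Gcd - H).map (phi2 p) = (Gcd - H) * P.map (gamma2 p ((↑(c * d) : ℤ_[p]))) := by
    rw [Aux7.map_sub_phi2, mul_sub, sub_mul, heqcd, hHeq]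
  have h0 : ∀ r s, PowerSeries.map (PowerSeries.constantCoeff : PowerSeries ℚ_[p] →+* ℚ_[p]) ((Gcd - H) r s) = 0 := by
    have hred : (Gcd - H).map (Aux7.redHom (p := p)) = 0 := by
      have h1 : Gcd.map (Aux7.redHom (p := p)) = 1 := Aux7.redHom_modPiId hmodcd
      have h2 : H.map (Aux7.redHom (p := p)) = 1 := by
        rw [hH, ← RingHom.mapMatrix_apply]
        rw [map_mul]
        rw [RingHom.mapMatrix_apply, RingHom.mapMatrix_apply, Aux7.map_map_red_gamma2,
          Aux7.redHom_modPiId hmodc, Aux7.redHom_modPiId hmodd, one_mul]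
      have : (Gcd - H).map (Aux7.redHom (p := p))
          = Gcd.map (Aux7.redHom (p := p)) - H.map (Aux7.redHom (p := p)) := by
        rw [← RingHom.mapMatrix_apply, ← RingHom.mapMatrix_apply, ← RingHom.mapMatrix_apply,
          map_sub]
      rw [this, h1, h2, sub_self]
    intro r s
    have := congrFun (congrFun hred r) s
    rw [Matrix.map_apply] at this
    exact this
  have hzero : Gcd - H = 0 :=
    Aux6.D_eq_zero k q z hq0 _ (Gcd - H) hDeq h0
  rw [← sub_eq_zero]
  exact hzero
end

section
/- For every y ∈ O_E[[π]] and every integer i ≥ 0, q^i divides φ(y) in O_E[[π]] if and only if π^i divides y in O_E[[π]]. -/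
open PowerSeries Filter Finset

section AuxPsSubst

variable {A : Type*} [CommRing A]

lemma coeff_pow_eq_zero' {g : PowerSeries A} (hg : PowerSeries.constantCoeff g = 0)
    {i j : ℕ} (hij : j < i) : PowerSeries.coeff j (g ^ i) = 0 :=
  PowerSeries.X_pow_dvd_iff.mp
    (pow_dvd_pow_of_dvd (PowerSeries.X_dvd_iff.mpr hg) i) j hij

lemma psSubst_coeff_eq {g : PowerSeries A} (hg : PowerSeries.constantCoeff g = 0)
    (f : PowerSeries A) {j N : ℕ} (hN : j < N) :
    PowerSeries.coeff j (psSubst g f) =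
      PowerSeries.coeff j
        (∑ i ∈ Finset.range N, PowerSeries.C (PowerSeries.coeff i f) * g ^ i) := by
  rw [psSubst, PowerSeries.coeff_mk, map_sum]
  simp only [PowerSeries.coeff_C_mul]
  refine Finset.sum_subset (Finset.range_subset_range.mpr hN) fun x hx hx' => ?_
  rw [coeff_pow_eq_zero' hg (by simp only [Finset.mem_range] at hx hx' ⊢; omega), mul_zero]

lemma psSubst_zero (g : PowerSeries A) : psSubst g 0 = 0 := by
  ext j
  simp [psSubst]

lemma coeff_mul_eq_zero' {g u : PowerSeries A} {j : ℕ}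
    (hu : ∀ b ≤ j, PowerSeries.coeff b u = 0) : PowerSeries.coeff j (g * u) = 0 := by
  rw [PowerSeries.coeff_mul]
  refine Finset.sum_eq_zero fun x hx => ?_
  rw [hu x.2 (by have := Finset.HasAntidiagonal.mem_antidiagonal.mp hx; omega), mul_zero]

lemma coeff_mul_congr' {g u v : PowerSeries A} {j : ℕ}
    (h : ∀ b ≤ j, PowerSeries.coeff b u = PowerSeries.coeff b v) :
    PowerSeries.coeff j (g * u) = PowerSeries.coeff j (g * v) := by
  have h0 : PowerSeries.coeff j (g * (u - v)) = 0 :=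
    coeff_mul_eq_zero' fun b hb => by simp [h b hb]
  rw [mul_sub, map_sub, sub_eq_zero] at h0
  exact h0

lemma psSubst_key {g : PowerSeries A} (hg : PowerSeries.constantCoeff g = 0)
    (a : A) (f : PowerSeries A) :
    psSubst g (PowerSeries.C a + PowerSeries.X * f)
      = PowerSeries.C a + g * psSubst g f := by
  ext j
  rw [psSubst_coeff_eq hg _ (show j < j + 2 by omega), Finset.sum_range_succ']
  have h0 : PowerSeries.coeff 0 (PowerSeries.C a + PowerSeries.X * f) = a := by simp
  have hs : ∀ i, PowerSeries.coeff (i + 1) (PowerSeries.C a + PowerSeries.X * f)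
      = PowerSeries.coeff i f := by
    intro i
    simp [PowerSeries.coeff_succ_X_mul, PowerSeries.coeff_C]
  simp only [h0, hs, pow_zero, mul_one, pow_succ']
  rw [map_add, map_add]
  rw [add_comm]
  congr 1
  have hmul : ∑ i ∈ Finset.range (j + 1),
      PowerSeries.C (PowerSeries.coeff i f) * (g * g ^ i)
      = g * ∑ i ∈ Finset.range (j + 1),
          PowerSeries.C (PowerSeries.coeff i f) * g ^ i := by
    rw [Finset.mul_sum]
    exact Finset.sum_congr rfl fun i _ => by ring
  rw [hmul]
  exact coeff_mul_congr' fun b hb =>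
    (psSubst_coeff_eq hg f (show b < j + 1 by omega)).symm

lemma psSubst_C' {g : PowerSeries A} (hg : PowerSeries.constantCoeff g = 0) (a : A) :
    psSubst g (PowerSeries.C a) = PowerSeries.C a := by
  have := psSubst_key hg a 0
  simpa [psSubst_zero] using this

lemma psSubst_X_mul {g : PowerSeries A} (hg : PowerSeries.constantCoeff g = 0)
    (f : PowerSeries A) :
    psSubst g (PowerSeries.X * f) = g * psSubst g f := by
  have := psSubst_key hg 0 f
  simpa using this

lemma coeff_one_add_X_pow (n m : ℕ) :
    PowerSeries.coeff m ((1 + PowerSeries.X) ^ n) = (n.choose m : A) := by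
  have h1 : ((1 : PowerSeries A) + PowerSeries.X) ^ n
      = ∑ k ∈ Finset.range (n + 1),
          PowerSeries.C (n.choose k : A) * PowerSeries.X ^ k := by
    rw [add_comm, add_pow]
    refine Finset.sum_congr rfl fun k _ => ?_
    rw [one_pow, mul_one, mul_comm, map_natCast]
  rw [h1, map_sum]
  simp only [PowerSeries.coeff_C_mul, PowerSeries.coeff_X_pow, mul_ite, mul_one, mul_zero]
  rw [Finset.sum_ite_eq (Finset.range (n + 1)) m fun k => ((n.choose k : A))]
  by_cases hm : m ∈ Finset.range (n + 1)
  · rw [if_pos hm]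
  · rw [if_neg hm, Nat.choose_eq_zero_of_lt (by simpa using hm), Nat.cast_zero]

end AuxPsSubst

section AuxE

variable {p : ℕ} [Fact p.Prime]
variable {E : Type*} [NormedField E] [NormedAlgebra ℚ_[p] E] [IsUltrametricDist E]

lemma mem_ringOfInt_norm_le (x : ringOfInt E) : ‖(x : E)‖ ≤ 1 := x.2

lemma norm_p_E : ‖((p : ℕ) : E)‖ = (p : ℝ)⁻¹ := by
  rw [show ((p : ℕ) : E) = algebraMap ℚ_[p] E ((p : ℕ) : ℚ_[p]) from (map_natCast _ p).symm,
    norm_algebraMap', Padic.norm_p]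

lemma norm_p_E_lt_one : ‖((p : ℕ) : E)‖ < 1 := by
  have hp2 := (Fact.out : p.Prime).two_le
  rw [norm_p_E]
  rw [inv_lt_one_iff₀]
  right
  exact_mod_cast by omega

lemma const_eq_zero_of_dvd (q : PowerSeries (ringOfInt E))
    (hqc : ∀ j, PowerSeries.coeff j q = ((p.choose (j + 1) : ℕ) : ringOfInt E))
    (c : ringOfInt E) (hd : q ∣ PowerSeries.C c) : c = 0 := by
  obtain ⟨h, hh⟩ := hd
  have hp2 := (Fact.out : p.Prime).two_le
  set P := p - 1 with hPdef
  have hPp : P + 1 = p := by omega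
  have hrec : ∀ m, PowerSeries.coeff m h
      = -∑ a ∈ Finset.range P,
          PowerSeries.coeff a q * PowerSeries.coeff (m + P - a) h := by
    intro m
    have h1 : PowerSeries.coeff (m + P) (PowerSeries.C c) = 0 := by
      rw [PowerSeries.coeff_C, if_neg (by omega)]
    rw [hh, PowerSeries.coeff_mul, Finset.Nat.sum_antidiagonal_eq_sum_range_succ_mk] at h1
    have h2 : ∑ a ∈ Finset.range (m + P + 1),
          PowerSeries.coeff a q * PowerSeries.coeff (m + P - a) h
        = ∑ a ∈ Finset.range (P + 1),
            PowerSeries.coeff a q * PowerSeries.coeff (m + P - a) h := by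
      refine (Finset.sum_subset (Finset.range_subset_range.mpr (by omega)) fun x hx hx' => ?_).symm
      rw [hqc x, Nat.choose_eq_zero_of_lt (by simp only [Finset.mem_range] at hx'; omega),
        Nat.cast_zero, zero_mul]
    rw [h2, Finset.sum_range_succ, hqc P, hPp, Nat.choose_self, Nat.cast_one, one_mul,
      show m + P - P = m by omega] at h1
    rw [add_comm] at h1
    exact eq_neg_of_add_eq_zero_left h1
  set H : ℕ → E := fun n => ((PowerSeries.coeff n h : ringOfInt E) : E) with hH
  have hnorm1 : ∀ n, ‖H n‖ ≤ 1 := fun n => (PowerSeries.coeff n h).2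
  have hrecE : ∀ m, H m = -∑ a ∈ Finset.range P,
      ((PowerSeries.coeff a q : ringOfInt E) : E) * H (m + P - a) := by
    intro m
    have h3 := congrArg ((ringOfInt E).subtype) (hrec m)
    simpa using h3
  have hple : ∀ a ∈ Finset.range P, ‖((PowerSeries.coeff a q : ringOfInt E) : E)‖ ≤ ‖((p : ℕ) : E)‖ := by
    intro a ha
    obtain ⟨t, ht⟩ := (Fact.out : p.Prime).dvd_choose_self (Nat.succ_ne_zero a)
      (by simp only [Finset.mem_range] at ha; omega)
    rw [hqc a]
    have : (((p.choose (a + 1) : ℕ) : ringOfInt E) : E) = ((p.choose (a + 1) : ℕ) : E) := by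
      push_cast
      rfl
    rw [this, ht, Nat.cast_mul, norm_mul]
    calc ‖((p : ℕ) : E)‖ * ‖((t : ℕ) : E)‖ ≤ ‖((p : ℕ) : E)‖ * 1 :=
          mul_le_mul_of_nonneg_left (IsUltrametricDist.norm_natCast_le_one E t) (norm_nonneg _)
      _ = ‖((p : ℕ) : E)‖ := mul_one _
  have hbound : ∀ k m, ‖H m‖ ≤ ‖((p : ℕ) : E)‖ ^ k := by
    intro k
    induction k with
    | zero => simpa using hnorm1
    | succ k ih =>
      intro m
      rw [hrecE m, norm_neg, pow_succ']
      refine IsUltrametricDist.norm_sum_le_of_forall_le_of_nonneg (by positivity) fun a ha => ?_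
      rw [norm_mul]
      exact mul_le_mul (hple a ha) (ih _) (norm_nonneg _) (norm_nonneg _)
  have hzero : ∀ m, H m = 0 := by
    intro m
    have htend : Filter.Tendsto (fun k => ‖((p : ℕ) : E)‖ ^ k) Filter.atTop (nhds 0) :=
      tendsto_pow_atTop_nhds_zero_of_lt_one (norm_nonneg _) norm_p_E_lt_one
    exact norm_le_zero_iff.mp (ge_of_tendsto' htend fun k => hbound k m)
  have hhz : h = 0 := by
    ext n
    have := hzero n
    simpa [hH] using congrArg id this
  rw [hhz, mul_zero] at hh
  have := congrArg (PowerSeries.constantCoeff) hh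
  simpa using this

end AuxE


theorem statement16 (p : ℕ) [Fact p.Prime]
    (E : Type*) [NormedField E] [NormedAlgebra ℚ_[p] E]
    [FiniteDimensional ℚ_[p] E] [IsUltrametricDist E]
    (q : PowerSeries (ringOfInt E)) (hq : PowerSeries.X * q = (1 + PowerSeries.X) ^ p - 1)
    (y : PowerSeries (ringOfInt E)) (i : ℕ) :
    q ^ i ∣ phiA p (ringOfInt E) y ↔ PowerSeries.X ^ i ∣ y := by
  
  classical
  have hp2 := (Fact.out : p.Prime).two_le
  have hg0 : PowerSeries.constantCoeff
      ((1 + PowerSeries.X : PowerSeries (ringOfInt E)) ^ p - 1) = 0 := by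
    simp
  have hqc : ∀ j, PowerSeries.coeff j q
      = ((p.choose (j + 1) : ℕ) : ringOfInt E) := by
    intro j
    have h := congrArg (PowerSeries.coeff (j + 1)) hq
    rw [PowerSeries.coeff_succ_X_mul, map_sub, coeff_one_add_X_pow,
      PowerSeries.coeff_one, if_neg (Nat.succ_ne_zero j), sub_zero] at h
    exact h
  have hq0 : PowerSeries.constantCoeff q = ((p : ℕ) : ringOfInt E) := by
    have h := hqc 0
    rw [Nat.choose_one_right] at h
    rw [← PowerSeries.coeff_zero_eq_constantCoeff_apply]
    exact h
  have hpA : ((p : ℕ) : ringOfInt E) ≠ 0 := by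
    intro h0
    have h1 : (((p : ℕ) : ringOfInt E) : E) = 0 := by rw [h0]; simp
    have h2 : ((p : ℕ) : E) = 0 := by
      rw [← h1]; push_cast; rfl
    have h3 := norm_p_E (p := p) (E := E)
    rw [h2, norm_zero] at h3
    have h4 : (0 : ℝ) < ((p : ℕ) : ℝ)⁻¹ := by positivity
    rw [← h3] at h4
    exact lt_irrefl _ h4
  have hqne : q ≠ 0 := fun h0 => hpA (by rw [← hq0, h0, map_zero])
  have hphiXmul : ∀ f : PowerSeries (ringOfInt E), phiA p (ringOfInt E) (PowerSeries.X * f)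
      = PowerSeries.X * q * phiA p (ringOfInt E) f := by
    intro f
    simp only [phiA]
    rw [psSubst_X_mul hg0, ← hq]
  constructor
  · intro hdvd
    have back : ∀ n (w : PowerSeries (ringOfInt E)),
        q ^ n ∣ phiA p (ringOfInt E) w → PowerSeries.X ^ n ∣ w := by
      intro n
      induction n with
      | zero => intro w _; simp
      | succ n ihn =>
        intro w hw
        set w' : PowerSeries (ringOfInt E) :=
          PowerSeries.mk fun k => PowerSeries.coeff (k + 1) w with hw'
        have hdec : w = PowerSeries.C (PowerSeries.constantCoeff w)
            + PowerSeries.X * w' := by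
          conv_lhs => rw [PowerSeries.eq_X_mul_shift_add_const w]
          rw [add_comm]
        have hphiw : phiA p (ringOfInt E) w
            = PowerSeries.C (PowerSeries.constantCoeff w)
              + PowerSeries.X * q * phiA p (ringOfInt E) w' := by
          conv_lhs => rw [hdec]
          simp only [phiA]
          rw [psSubst_key hg0, ← hq]
        have hc0 : PowerSeries.constantCoeff w = 0 := by
          refine const_eq_zero_of_dvd q hqc _ ?_
          have h1 : q ∣ phiA p (ringOfInt E) w :=
            dvd_trans (dvd_pow_self q (Nat.succ_ne_zero n)) hw
          have h2 : q ∣ PowerSeries.X * q * phiA p (ringOfInt E) w' :=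
            ⟨PowerSeries.X * phiA p (ringOfInt E) w', by ring⟩
          have h3 := dvd_sub h1 h2
          rw [hphiw] at h3
          simpa using h3
        obtain ⟨v, hv⟩ := hw
        rw [hphiw, hc0, map_zero, zero_add] at hv
        have hv2 : PowerSeries.X * phiA p (ringOfInt E) w' = q ^ n * v := by
          refine mul_left_cancel₀ hqne ?_
          rw [show q * (PowerSeries.X * phiA p (ringOfInt E) w')
              = PowerSeries.X * q * phiA p (ringOfInt E) w' by ring, hv, pow_succ]
          ring
        have hv0 : PowerSeries.constantCoeff v = 0 := by
          have h5 := congrArg (PowerSeries.constantCoeff) hv2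
          rw [map_mul, map_mul, map_pow, PowerSeries.constantCoeff_X, zero_mul, hq0] at h5
          have hppow : ((p : ℕ) : ringOfInt E) ^ n ≠ 0 := pow_ne_zero _ hpA
          exact (mul_eq_zero.mp h5.symm).resolve_left hppow
        obtain ⟨v', hv'⟩ := PowerSeries.X_dvd_iff.mpr hv0
        rw [hv'] at hv2
        have hv3 : phiA p (ringOfInt E) w' = q ^ n * v' := by
          refine mul_left_cancel₀ (PowerSeries.X_ne_zero :
            (PowerSeries.X : PowerSeries (ringOfInt E)) ≠ 0) ?_
          rw [hv2]; ring
        obtain ⟨u, hu⟩ := ihn w' ⟨v', hv3⟩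
        refine ⟨u, ?_⟩
        rw [hdec, hc0, map_zero, zero_add, hu, pow_succ']
        ring
    exact back i y hdvd
  · rintro ⟨z, rfl⟩
    have key : ∀ n (z : PowerSeries (ringOfInt E)), phiA p (ringOfInt E) (PowerSeries.X ^ n * z)
        = (PowerSeries.X * q) ^ n * phiA p (ringOfInt E) z := by
      intro n
      induction n with
      | zero => intro z; simp
      | succ n ihn =>
        intro z
        rw [pow_succ', mul_assoc, hphiXmul, ihn, pow_succ']
        ring
    exact ⟨PowerSeries.X ^ i * phiA p (ringOfInt E) z, by rw [key, mul_pow]; ring⟩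
end

section
/- Let α ∈ m_E and x_1, x_2 ∈ O_E[[π]], and consider for an integer i ≥ 1 the condition D_i: q^i divides −φ(x_2) in O_E[[π]] and q^i divides q^{k−1}·φ(x_1) + α·z·φ(x_2) in O_E[[π]]. Then: (a) for 1 ≤ i ≤ k−1, D_i holds if and only if π^i divides x_2; (b) for i ≥ k, D_i holds if and only if π^{i−(k−1)} divides x_1 and π^i divides x_2. -/
open PowerSeries Filter Finset

namespace Aux17

open PowerSeries Finset

section PsSubst

variable {A : Type*} [CommRing A]

lemma psSubst_add (g f h : PowerSeries A) :
    psSubst g (f + h) = psSubst g f + psSubst g h := by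
  ext j
  simp [psSubst, add_mul, Finset.sum_add_distrib]

lemma psSubst_C (g : PowerSeries A) (c : A) :
    psSubst g (PowerSeries.C c) = PowerSeries.C c := by
  ext j
  simp only [psSubst, coeff_mk, PowerSeries.coeff_C]
  rw [Finset.sum_eq_single 0]
  · simp [PowerSeries.coeff_one]
  · intro i _ hi; simp [hi]
  · intro h; simp at h

lemma coeff_pow_zero_of_lt {g : PowerSeries A} (hg : PowerSeries.constantCoeff g = 0)
    {b i : ℕ} (hbi : b < i) : PowerSeries.coeff b (g ^ i) = 0 := by
  have hX : (PowerSeries.X : PowerSeries A) ^ i ∣ g ^ i :=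
    pow_dvd_pow_of_dvd (PowerSeries.X_dvd_iff.mpr hg) i
  exact PowerSeries.X_pow_dvd_iff.mp hX b hbi

lemma psSubst_X_mul {g : PowerSeries A} (hg : PowerSeries.constantCoeff g = 0)
    (f : PowerSeries A) :
    psSubst g (PowerSeries.X * f) = g * psSubst g f := by
  ext j
  have hL : PowerSeries.coeff j (psSubst g (PowerSeries.X * f))
      = ∑ i ∈ Finset.range (j + 1), PowerSeries.coeff i f * PowerSeries.coeff j (g ^ (i+1)) := by
    simp only [psSubst, coeff_mk]
    rw [Finset.sum_range_succ' (fun i => PowerSeries.coeff i (PowerSeries.X * f) * PowerSeries.coeff j (g ^ i))]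
    simp only [coeff_succ_X_mul, pow_zero, map_one, coeff_zero_X_mul]
    rw [Finset.sum_range_succ, coeff_pow_zero_of_lt hg (Nat.lt_succ_self j)]
    simp
  rw [hL, mul_comm g (psSubst g f), PowerSeries.coeff_mul,
    Finset.Nat.sum_antidiagonal_eq_sum_range_succ_mk]
  simp only [psSubst, coeff_mk]
  have hinner : ∀ x ∈ Finset.range (j+1),
      (∑ i ∈ Finset.range (x + 1), PowerSeries.coeff i f * PowerSeries.coeff x (g ^ i))
        * PowerSeries.coeff (j - x) g
      = ∑ i ∈ Finset.range (j + 1),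
          PowerSeries.coeff i f * PowerSeries.coeff x (g ^ i) * PowerSeries.coeff (j - x) g := by
    intro x hx
    rw [Finset.sum_mul]
    apply Finset.sum_subset
    · apply Finset.range_subset_range.mpr
      simp only [Finset.mem_range] at hx; omega
    · intro i hi hix
      simp only [Finset.mem_range, not_lt] at hix
      have : x < i := by omega
      rw [coeff_pow_zero_of_lt hg this, mul_zero, zero_mul]
  rw [Finset.sum_congr rfl hinner, Finset.sum_comm]
  apply Finset.sum_congr rfl
  intro i _
  rw [pow_succ, PowerSeries.coeff_mul, Finset.Nat.sum_antidiagonal_eq_sum_range_succ_mk,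
    Finset.mul_sum]
  apply Finset.sum_congr rfl
  intro x _
  ring

lemma psSubst_X_pow_mul {g : PowerSeries A} (hg : PowerSeries.constantCoeff g = 0)
    (i : ℕ) (f : PowerSeries A) :
    psSubst g (PowerSeries.X ^ i * f) = g ^ i * psSubst g f := by
  induction i with
  | zero => simp
  | succ i ih =>
    rw [pow_succ, mul_assoc, mul_left_comm (PowerSeries.X ^ i) PowerSeries.X f,
      psSubst_X_mul hg, ih, pow_succ]
    ring

lemma shift_decomp (f : PowerSeries A) :
    f = PowerSeries.C (PowerSeries.constantCoeff f)
      + PowerSeries.X * PowerSeries.mk (fun n => PowerSeries.coeff (n+1) f) := by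
  ext n
  rcases n with _ | n
  · simp
  · simp [PowerSeries.coeff_C]

end PsSubst


variable (p : ℕ) [hp : Fact p.Prime]

/-- The series `q` with `ℚ_p` coefficients. -/
noncomputable def qc : PowerSeries ℚ_[p] := PowerSeries.mk fun j => (p.choose (j+1) : ℚ_[p])

/-- Coefficients of the inverse of `qc`. -/
noncomputable def bs (n : ℕ) : ℚ_[p] := PowerSeries.coeff n (qc p)⁻¹

lemma constantCoeff_qc : PowerSeries.constantCoeff (qc p) = p := by
  have : PowerSeries.coeff 0 (qc p) = p := by
    simp [qc, Nat.choose_one_right]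
  simpa using this

lemma pQ_ne_zero : ((p : ℚ_[p])) ≠ 0 := by
  exact_mod_cast Nat.cast_ne_zero.mpr hp.out.ne_zero

lemma qc_mul_inv : qc p * (qc p)⁻¹ = 1 :=
  PowerSeries.mul_inv_cancel _ (by rw [constantCoeff_qc]; exact pQ_ne_zero p)

lemma bs_rel (n : ℕ) :
    ∑ k ∈ Finset.range (n+1), (p.choose (k+1) : ℚ_[p]) * bs p (n - k)
      = if n = 0 then 1 else 0 := by
  have := congrArg (PowerSeries.coeff n) (qc_mul_inv p)
  rw [PowerSeries.coeff_mul, Finset.Nat.sum_antidiagonal_eq_sum_range_succ_mk,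
    PowerSeries.coeff_one] at this
  simpa [qc, bs] using this

lemma bs_rec (n : ℕ) :
    (p : ℚ_[p]) * bs p n = (if n = 0 then 1 else 0)
      - ∑ k ∈ Finset.range n, (p.choose (k+2) : ℚ_[p]) * bs p (n - (k+1)) := by
  have h := bs_rel p n
  rw [Finset.sum_range_succ'] at h
  norm_num [Nat.choose_one_right] at h
  linear_combination h

lemma norm_choose_le (k : ℕ) (hk0 : k ≠ 0) (hkp : k < p) :
    ‖(p.choose k : ℚ_[p])‖ ≤ (p:ℝ)⁻¹ := by
  obtain ⟨t, ht⟩ := Nat.Prime.dvd_choose_self hp.out hk0 hkp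
  rw [ht]
  push_cast
  rw [norm_mul, Padic.norm_p]
  have : ‖(t : ℚ_[p])‖ ≤ 1 := by
    exact_mod_cast Padic.norm_int_le_one (t : ℤ)
  have h0 : (0:ℝ) ≤ (p:ℝ)⁻¹ := by positivity
  nlinarith [norm_nonneg ((t : ℚ_[p]))]

lemma one_lt_pR : (1:ℝ) < p := by exact_mod_cast hp.out.one_lt

lemma norm_bs_mul (n : ℕ) : ‖bs p n‖ = (p:ℝ) * ‖(p:ℚ_[p]) * bs p n‖ := by
  rw [norm_mul, Padic.norm_p]
  have hp0 : ((p:ℝ)) ≠ 0 := by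
    have := hp.out.pos; positivity
  field_simp

/-- Estimate A. -/
lemma norm_bs_le (n : ℕ) : ‖bs p n‖ ≤ (p:ℝ) ^ (n / (p-1) + 1) := by
  induction n using Nat.strong_induction_on with
  | _ n ih =>
    have hp1 : (1:ℝ) < p := one_lt_pR p
    have hp0 : (0:ℝ) < p := lt_trans one_pos hp1
    have key : ‖(p:ℚ_[p]) * bs p n‖ ≤ (p:ℝ) ^ (n / (p-1)) := by
      rw [bs_rec]
      have hsum : ‖∑ k ∈ Finset.range n, (p.choose (k+2) : ℚ_[p]) * bs p (n - (k+1))‖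
          ≤ (p:ℝ) ^ (n / (p-1)) := by
        apply IsUltrametricDist.norm_sum_le_of_forall_le_of_nonneg (by positivity)
        intro k hk
        rw [Finset.mem_range] at hk
        rcases lt_trichotomy (k+2) p with hlt | heq | hgt
        · rw [norm_mul]
          have h1 : ‖(p.choose (k+2) : ℚ_[p])‖ ≤ (p:ℝ)⁻¹ := norm_choose_le p _ (by omega) hlt
          have h2 : ‖bs p (n - (k+1))‖ ≤ (p:ℝ) ^ ((n - (k+1)) / (p-1) + 1) := ih _ (by omega)
          have h3 : (p:ℝ) ^ ((n - (k+1)) / (p-1) + 1) = (p:ℝ) * (p:ℝ) ^ ((n - (k+1)) / (p-1)) := by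
            rw [pow_succ]; ring
          have h4 : (p:ℝ) ^ ((n - (k+1)) / (p-1)) ≤ (p:ℝ) ^ (n / (p-1)) := by
            apply pow_le_pow_right₀ (le_of_lt hp1)
            exact Nat.div_le_div_right (by omega)
          calc ‖(p.choose (k+2) : ℚ_[p])‖ * ‖bs p (n - (k+1))‖
              ≤ (p:ℝ)⁻¹ * ((p:ℝ) * (p:ℝ) ^ ((n - (k+1)) / (p-1))) := by
                rw [← h3]
                apply mul_le_mul h1 h2 (norm_nonneg _) (by positivity)
            _ = (p:ℝ) ^ ((n - (k+1)) / (p-1)) := by field_simp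
            _ ≤ _ := h4
        · -- k+2 = p, so k+1 = p-1 and n > k = p-2, i.e. n ≥ p-1
          have hkp : k + 1 = p - 1 := by omega
          have hnp : p - 1 ≤ n := by omega
          have hch : p.choose (k+2) = 1 := by rw [heq]; exact Nat.choose_self p
          rw [hch, Nat.cast_one, one_mul]
          have h2 : ‖bs p (n - (k+1))‖ ≤ (p:ℝ) ^ ((n - (k+1)) / (p-1) + 1) := ih _ (by omega)
          have hdiv : (n - (k+1)) / (p-1) + 1 = n / (p-1) := by
            rw [hkp]
            rw [Nat.div_eq_sub_div (by omega) hnp]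
          rw [hdiv] at h2; exact h2
        · have : p.choose (k+2) = 0 := Nat.choose_eq_zero_of_lt hgt
          rw [this]
          simp only [Nat.cast_zero, zero_mul, norm_zero]
          positivity
      rcases Nat.eq_zero_or_pos n with h0 | hpos
      · subst h0
        simp only [if_pos rfl]
        calc ‖(1:ℚ_[p]) - ∑ k ∈ Finset.range 0, (p.choose (k+2) : ℚ_[p]) * bs p (0 - (k+1))‖
            = 1 := by simp
          _ ≤ _ := one_le_pow₀ (le_of_lt hp1)
      · rw [if_neg (by omega), zero_sub, norm_neg]
        exact hsum
    rw [norm_bs_mul]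
    calc (p:ℝ) * ‖(p:ℚ_[p]) * bs p n‖ ≤ (p:ℝ) * (p:ℝ) ^ (n / (p-1)) := by
          apply mul_le_mul_of_nonneg_left key (le_of_lt hp0)
      _ = (p:ℝ) ^ (n / (p-1) + 1) := by rw [pow_succ]; ring



lemma norm_eq_of_add_lt {x y : ℚ_[p]} (h : ‖x + y‖ < ‖y‖) : ‖x‖ = ‖y‖ := by
  have h1 : ‖x‖ ≤ max ‖x + y‖ ‖y‖ := by
    have := IsUltrametricDist.norm_add_le_max (x + y) (-y)
    simpa using this
  have h2 : ‖y‖ ≤ max ‖x + y‖ ‖x‖ := by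
    have := IsUltrametricDist.norm_add_le_max (x + y) (-x)
    rw [show x + y + -x = y by ring, norm_neg] at this
    exact this
  rcases max_cases ‖x + y‖ ‖y‖ with ⟨he, _⟩ | ⟨he, _⟩ <;>
    rcases max_cases ‖x + y‖ ‖x‖ with ⟨he2, _⟩ | ⟨he2, _⟩ <;>
    rw [he] at h1 <;> rw [he2] at h2 <;> linarith

/-- Estimate B. -/
lemma norm_bs_exact (m : ℕ) : ‖bs p (m * (p-1))‖ = (p:ℝ) ^ (m+1) := by
  have hp2 : 2 ≤ p := hp.out.two_le
  have hp1 : (1:ℝ) < p := one_lt_pR p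
  have hp0 : (0:ℝ) < p := lt_trans one_pos hp1
  induction m with
  | zero =>
    have h := bs_rec p 0
    norm_num at h
    rw [show (0:ℕ) * (p-1) = 0 by simp, norm_bs_mul, h, norm_one, pow_one, mul_one]
  | succ m ih =>
    set n := (m+1) * (p-1) with hn_def
    have hn : n = m * (p-1) + (p-1) := by rw [hn_def, Nat.succ_mul]
    have hrec := bs_rec p n
    have hne : n ≠ 0 := by omega
    rw [if_neg hne, zero_sub] at hrec
    have hmem : p - 2 ∈ Finset.range n := by
      rw [Finset.mem_range]; omega
    rw [← Finset.add_sum_erase _ _ hmem] at hrec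
    have hidx : n - (p - 2 + 1) = m * (p-1) := by omega
    have hch : p.choose (p - 2 + 2) = 1 := by
      have : p - 2 + 2 = p := by omega
      rw [this, Nat.choose_self]
    rw [hidx, hch, Nat.cast_one, one_mul] at hrec
    -- hrec : p * bs n = -(bs (m*(p-1)) + Σ_erase)
    have hErase : ‖∑ k ∈ (Finset.range n).erase (p-2),
        (p.choose (k+2) : ℚ_[p]) * bs p (n - (k+1))‖ ≤ (p:ℝ) ^ m := by
      apply IsUltrametricDist.norm_sum_le_of_forall_le_of_nonneg (by positivity)
      intro k hk
      rw [Finset.mem_erase, Finset.mem_range] at hk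
      obtain ⟨hkne, hkn⟩ := hk
      rcases lt_trichotomy (k+2) p with hlt | heq | hgt
      · rw [norm_mul]
        have h1 : ‖(p.choose (k+2) : ℚ_[p])‖ ≤ (p:ℝ)⁻¹ := norm_choose_le p _ (by omega) hlt
        have h2 : ‖bs p (n - (k+1))‖ ≤ (p:ℝ) ^ ((n - (k+1)) / (p-1) + 1) := norm_bs_le p _
        have hdle : (n - (k+1)) / (p-1) ≤ m := by
          have : (n - (k+1)) / (p-1) < m + 1 := by
            rw [Nat.div_lt_iff_lt_mul (by omega)]
            omega
          omega
        calc ‖(p.choose (k+2) : ℚ_[p])‖ * ‖bs p (n - (k+1))‖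
            ≤ (p:ℝ)⁻¹ * ((p:ℝ) ^ ((n - (k+1)) / (p-1) + 1)) :=
              mul_le_mul h1 h2 (norm_nonneg _) (by positivity)
          _ = (p:ℝ) ^ ((n - (k+1)) / (p-1)) := by
              rw [pow_succ]; field_simp
          _ ≤ (p:ℝ) ^ m := pow_le_pow_right₀ (le_of_lt hp1) hdle
      · exact absurd (by omega : k = p - 2) hkne
      · rw [Nat.choose_eq_zero_of_lt hgt]
        simp only [Nat.cast_zero, zero_mul, norm_zero]
        positivity
    have hbig : ‖bs p (m * (p-1))‖ = (p:ℝ) ^ (m+1) := ih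
    have hx : ‖(p:ℚ_[p]) * bs p n + bs p (m * (p-1))‖ < ‖bs p (m * (p-1))‖ := by
      have : (p:ℚ_[p]) * bs p n + bs p (m * (p-1))
          = -∑ k ∈ (Finset.range n).erase (p-2),
              (p.choose (k+2) : ℚ_[p]) * bs p (n - (k+1)) := by
        linear_combination hrec
      rw [this, norm_neg, hbig]
      exact lt_of_le_of_lt hErase (pow_lt_pow_right₀ hp1 (Nat.lt_succ_self m))
    have heq := norm_eq_of_add_lt p hx
    rw [norm_bs_mul, heq, hbig, pow_succ]
    ring


lemma coeff_q_eq {A : Type*} [CommRing A] (p : ℕ) (q : PowerSeries A)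
    (hq : PowerSeries.X * q = (1 + PowerSeries.X) ^ p - 1) (j : ℕ) :
    PowerSeries.coeff j q = (p.choose (j+1) : A) := by
  have h := congrArg (PowerSeries.coeff (j+1)) hq
  rw [coeff_succ_X_mul] at h
  rw [h, map_sub, PowerSeries.coeff_one, if_neg (Nat.succ_ne_zero j), sub_zero,
    add_comm (1 : PowerSeries A) PowerSeries.X, add_pow]
  simp only [one_pow, mul_one]
  rw [map_sum, Finset.sum_eq_single (j+1)]
  · rw [← map_natCast (PowerSeries.C (R := A)) (p.choose (j+1)), mul_comm, PowerSeries.coeff_C_mul,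
      PowerSeries.coeff_X_pow, if_pos rfl, mul_one]
  · intro b _ hb
    rw [← map_natCast (PowerSeries.C (R := A)) (p.choose b), mul_comm, PowerSeries.coeff_C_mul,
      PowerSeries.coeff_X_pow, if_neg (fun hh => hb hh.symm), mul_zero]
  · intro hnot
    rw [Finset.mem_range, not_lt] at hnot
    simp [Nat.choose_eq_zero_of_lt (show p < j + 1 by omega)]

section ConstLemma

variable (p : ℕ) [hp : Fact p.Prime]
variable (E : Type*) [NormedField E] [NormedAlgebra ℚ_[p] E] [IsUltrametricDist E]

lemma pE_ne_zero : ((p : ℕ) : E) ≠ 0 := by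
  intro h
  apply pQ_ne_zero p
  apply RingHom.injective (algebraMap ℚ_[p] E)
  rw [map_natCast, h, map_zero]

lemma pA_ne_zero : ((p : ℕ) : ringOfInt E) ≠ 0 := by
  intro h
  apply pE_ne_zero p E
  have h2 := congrArg ((ringOfInt E).subtype) h
  rw [map_natCast, map_zero] at h2
  exact h2

lemma const_eq_zero_of_dvd (q : PowerSeries (ringOfInt E))
    (hcoeff : ∀ j, PowerSeries.coeff j q = (p.choose (j+1) : ringOfInt E))
    (c : ringOfInt E) (h : q ∣ PowerSeries.C c) : c = 0 := by
  classical
  obtain ⟨y, hy⟩ := h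
  set ι := (ringOfInt E).subtype with hι
  set Am := algebraMap ℚ_[p] E with hAm
  have hrelE : ∀ n : ℕ, (if n = 0 then (c : E) else 0)
      = ∑ k ∈ Finset.range (n+1),
          ((p.choose (k+1) : ℕ) : E) * ι (PowerSeries.coeff (n-k) y) := by
    intro n
    have h2 := congrArg (fun f => ι (PowerSeries.coeff n f)) hy
    simp only [PowerSeries.coeff_C, PowerSeries.coeff_mul,
      Finset.Nat.sum_antidiagonal_eq_sum_range_succ_mk, map_sum, map_mul,
      apply_ite ι, map_zero, hcoeff, map_natCast] at h2
    exact h2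
  have key : ∀ n : ℕ, ι (PowerSeries.coeff n y) = (c : E) * Am (bs p n) := by
    intro n
    induction n using Nat.strong_induction_on with
    | _ n ih =>
      have hEn := (hrelE n).symm
      rw [Finset.sum_range_succ'] at hEn
      norm_num [Nat.choose_one_right] at hEn
      -- hEn : Σ_{k ∈ range n} (choose (k+2) : E) * ι y_{n-(k+1)} + p * ι y_n = δ c
      have hB := congrArg Am (bs_rec p n)
      simp only [map_mul, map_sub, map_sum, map_natCast, apply_ite Am, map_one, map_zero] at hB
      have hB' : ((p:ℕ) : E) * ((c : E) * Am (bs p n))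
          = (if n = 0 then (c : E) else 0)
            - ∑ k ∈ Finset.range n,
                ((p.choose (k+2) : ℕ) : E) * ((c:E) * Am (bs p (n - (k+1)))) := by
        calc ((p:ℕ) : E) * ((c : E) * Am (bs p n))
            = (c:E) * (((p:ℕ) : E) * Am (bs p n)) := by ring
          _ = (c:E) * ((if n = 0 then (1:E) else 0)
                - ∑ k ∈ Finset.range n, ((p.choose (k+2) : ℕ) : E) * Am (bs p (n - (k+1)))) := by
              rw [hB]
          _ = _ := by
              rw [mul_sub, Finset.mul_sum, mul_ite, mul_one, mul_zero]
              congr 1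
              apply Finset.sum_congr rfl
              intro k _
              ring
      have hsub : ∀ k ∈ Finset.range n,
          ((p.choose (k+2) : ℕ) : E) * ι (PowerSeries.coeff (n-(k+1)) y)
          = ((p.choose (k+2) : ℕ) : E) * ((c:E) * Am (bs p (n - (k+1)))) := by
        intro k hk
        rw [Finset.mem_range] at hk
        rw [ih _ (by omega)]
      rw [Finset.sum_congr rfl hsub] at hEn
      apply mul_left_cancel₀ (pE_ne_zero p E)
      linear_combination hEn - hB'
  have hnorm : ∀ m : ℕ, ‖(c : E)‖ * (p:ℝ) ^ (m+1) ≤ 1 := by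
    intro m
    have h1 : ‖ι (PowerSeries.coeff (m*(p-1)) y)‖ ≤ 1 :=
      (PowerSeries.coeff (m*(p-1)) y).2
    rw [key, norm_mul, hAm, norm_algebraMap', norm_bs_exact] at h1
    exact h1
  have hp1 : (1:ℝ) < p := one_lt_pR p
  have hle : ∀ m : ℕ, ‖(c : E)‖ ≤ ((p:ℝ)⁻¹) ^ (m+1) := by
    intro m
    have hppos : (0:ℝ) < (p:ℝ) ^ (m+1) := by positivity
    rw [inv_pow]
    calc ‖(c : E)‖ = ‖(c : E)‖ * (p:ℝ) ^ (m+1) * ((p:ℝ) ^ (m+1))⁻¹ := by field_simp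
      _ ≤ 1 * ((p:ℝ) ^ (m+1))⁻¹ :=
          mul_le_mul_of_nonneg_right (hnorm m) (by positivity)
      _ = ((p:ℝ) ^ (m+1))⁻¹ := one_mul _
  have htend : Filter.Tendsto (fun m : ℕ => ((p:ℝ)⁻¹) ^ (m+1)) Filter.atTop (nhds 0) := by
    have h0 : |(p:ℝ)⁻¹| < 1 := by
      rw [abs_of_nonneg (by positivity)]
      exact inv_lt_one_of_one_lt₀ hp1
    exact (tendsto_pow_atTop_nhds_zero_of_abs_lt_one h0).comp (Filter.tendsto_add_atTop_nat 1)
  have h0 : ‖(c : E)‖ ≤ 0 :=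
    le_of_tendsto_of_tendsto' tendsto_const_nhds htend hle
  have hc : (c : E) = 0 := norm_le_zero_iff.mp h0
  exact Subtype.ext hc

end ConstLemma


section KeyLemma

variable (p : ℕ) [hp : Fact p.Prime]
variable (E : Type*) [NormedField E] [NormedAlgebra ℚ_[p] E] [IsUltrametricDist E]
variable (q : PowerSeries (ringOfInt E))

lemma hg_zero (hq : PowerSeries.X * q = (1 + PowerSeries.X) ^ p - 1) :
    PowerSeries.constantCoeff (R := ringOfInt E) ((1 + PowerSeries.X) ^ p - 1) = 0 := by
  rw [← hq]
  simp

lemma constCoeff_q (hq : PowerSeries.X * q = (1 + PowerSeries.X) ^ p - 1) :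
    PowerSeries.constantCoeff q = ((p:ℕ) : ringOfInt E) := by
  have := coeff_q_eq p q hq 0
  rw [Nat.zero_add, Nat.choose_one_right] at this
  rw [← PowerSeries.coeff_zero_eq_constantCoeff_apply, this]

lemma q_ne_zero (hq : PowerSeries.X * q = (1 + PowerSeries.X) ^ p - 1) : q ≠ 0 := by
  intro h
  apply pA_ne_zero p E
  rw [← constCoeff_q p E q hq, h, map_zero]

lemma phi_decomp (hq : PowerSeries.X * q = (1 + PowerSeries.X) ^ p - 1)
    (x : PowerSeries (ringOfInt E)) :
    phiA p (ringOfInt E) x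
      = PowerSeries.C (PowerSeries.constantCoeff x)
        + (PowerSeries.X * q) * phiA p (ringOfInt E)
            (PowerSeries.mk fun n => PowerSeries.coeff (n+1) x) := by
  conv_lhs => rw [shift_decomp x]
  show psSubst _ _ = _
  rw [psSubst_add, psSubst_C, psSubst_X_mul (hg_zero p E q hq), hq]
  rfl

lemma key_mp (hq : PowerSeries.X * q = (1 + PowerSeries.X) ^ p - 1) :
    ∀ (i : ℕ) (x : PowerSeries (ringOfInt E)),
      q ^ i ∣ phiA p (ringOfInt E) x → (PowerSeries.X : PowerSeries (ringOfInt E)) ^ i ∣ x := by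
  intro i
  induction i with
  | zero => intro x _; simpa using one_dvd x
  | succ i ih =>
    intro x hx
    set x1 := PowerSeries.mk (fun n => PowerSeries.coeff (n+1) x) with hx1
    have hphi := phi_decomp p E q hq x
    have hq1 : q ∣ phiA p (ringOfInt E) x := dvd_trans (dvd_pow_self q (Nat.succ_ne_zero i)) hx
    have hc0 : PowerSeries.constantCoeff x = 0 := by
      apply const_eq_zero_of_dvd p E q (coeff_q_eq p q hq)
      have h2 : q ∣ (PowerSeries.X * q) * phiA p (ringOfInt E) x1 :=
        Dvd.dvd.mul_right (Dvd.dvd.mul_left (dvd_refl q) PowerSeries.X) _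
      have h3 := dvd_sub hq1 h2
      rw [hphi] at h3
      simpa [hx1] using h3
    have hdec : x = PowerSeries.X * x1 := by
      conv_lhs => rw [shift_decomp x]
      rw [hc0, map_zero, zero_add]
    rw [hphi, hc0, map_zero, zero_add] at hx
    obtain ⟨w, hw⟩ := hx
    have hcancel : PowerSeries.X * phiA p (ringOfInt E) x1 = q ^ i * w := by
      apply mul_left_cancel₀ (q_ne_zero p E q hq)
      calc q * (PowerSeries.X * phiA p (ringOfInt E) x1)
          = PowerSeries.X * q * phiA p (ringOfInt E) x1 := by ring
        _ = q ^ (i+1) * w := hw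
        _ = q * (q ^ i * w) := by ring
    have hw0 : PowerSeries.constantCoeff w = 0 := by
      have h4 := congrArg (PowerSeries.constantCoeff (R := (ringOfInt E))) hcancel
      rw [map_mul, map_mul, map_pow, PowerSeries.constantCoeff_X, zero_mul,
        constCoeff_q p E q hq] at h4
      rcases mul_eq_zero.mp h4.symm with h5 | h5
      · exact absurd h5 (pow_ne_zero i (pA_ne_zero p E))
      · exact h5
    set w1 := PowerSeries.mk (fun n => PowerSeries.coeff (n+1) w) with hw1
    have hwdec : w = PowerSeries.X * w1 := by
      conv_lhs => rw [shift_decomp w]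
      rw [hw0, map_zero, zero_add]
    have hphix1 : phiA p (ringOfInt E) x1 = q ^ i * w1 := by
      apply mul_left_cancel₀ (PowerSeries.X_ne_zero :
        (PowerSeries.X : PowerSeries (ringOfInt E)) ≠ 0)
      rw [hcancel, hwdec]
      ring
    obtain ⟨u, hu⟩ := ih x1 ⟨w1, hphix1⟩
    exact ⟨u, by rw [hdec, hu, pow_succ]; ring⟩

lemma key_mpr (hq : PowerSeries.X * q = (1 + PowerSeries.X) ^ p - 1)
    (i : ℕ) (x : PowerSeries (ringOfInt E)) (hx : PowerSeries.X ^ i ∣ x) :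
    q ^ i ∣ phiA p (ringOfInt E) x := by
  obtain ⟨u, hu⟩ := hx
  refine ⟨PowerSeries.X ^ i * phiA p (ringOfInt E) u, ?_⟩
  have h1 : phiA p (ringOfInt E) x
      = ((1 + PowerSeries.X) ^ p - 1) ^ i * phiA p (ringOfInt E) u := by
    rw [hu]
    exact psSubst_X_pow_mul (hg_zero p E q hq) i u
  rw [h1, ← hq, mul_pow]
  ring

lemma key_iff (hq : PowerSeries.X * q = (1 + PowerSeries.X) ^ p - 1)
    (i : ℕ) (x : PowerSeries (ringOfInt E)) :
    q ^ i ∣ phiA p (ringOfInt E) x ↔ (PowerSeries.X : PowerSeries (ringOfInt E)) ^ i ∣ x :=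
  ⟨key_mp p E q hq i x, key_mpr p E q hq i x⟩

end KeyLemma

end Aux17

theorem statement17 (p : ℕ) [Fact p.Prime] (k : ℕ) (hk : 2 ≤ k)
    (qQ : PowerSeries ℚ_[p]) (hqQ : PowerSeries.X * qQ = (1 + PowerSeries.X) ^ p - 1)
    (lamPlus lamMinus : PowerSeries ℚ_[p])
    (hplus : CoeffTendsto p (partialPlus p qQ) lamPlus)
    (hminus : CoeffTendsto p (partialMinus p qQ) lamMinus)
    (E : Type*) [NormedField E] [NormedAlgebra ℚ_[p] E]
    [FiniteDimensional ℚ_[p] E] [IsUltrametricDist E]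
    (q : PowerSeries (ringOfInt E)) (hq : PowerSeries.X * q = (1 + PowerSeries.X) ^ p - 1)
    (z : PowerSeries (ringOfInt E))
    (hz : ∀ j : ℕ, (PowerSeries.coeff (R := ringOfInt E) j z : E)
        = algebraMap ℚ_[p] E (PowerSeries.coeff j (zSeries p k lamPlus lamMinus)))
    (α : ringOfInt E) (hα : ‖(α : E)‖ < 1)
    (x₁ x₂ : PowerSeries (ringOfInt E)) :
    (∀ i : ℕ, 1 ≤ i → i ≤ k - 1 →
      ((q ^ i ∣ -(phiA p (ringOfInt E) x₂) ∧
        q ^ i ∣ (q ^ (k - 1) * phiA p (ringOfInt E) x₁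
          + PowerSeries.C α * z * phiA p (ringOfInt E) x₂))
        ↔ PowerSeries.X ^ i ∣ x₂)) ∧
    (∀ i : ℕ, k ≤ i →
      ((q ^ i ∣ -(phiA p (ringOfInt E) x₂) ∧
        q ^ i ∣ (q ^ (k - 1) * phiA p (ringOfInt E) x₁
          + PowerSeries.C α * z * phiA p (ringOfInt E) x₂))
        ↔ (PowerSeries.X ^ (i - (k - 1)) ∣ x₁ ∧ PowerSeries.X ^ i ∣ x₂))) := by
  have hkey := Aux17.key_iff p E q hq
  have hqne := Aux17.q_ne_zero p E q hq
  constructor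
  · intro i hi1 hik
    constructor
    · rintro ⟨hd1, -⟩
      exact (hkey i x₂).mp (dvd_neg.mp hd1)
    · intro hx
      have h2 : q ^ i ∣ phiA p (ringOfInt E) x₂ := (hkey i x₂).mpr hx
      refine ⟨dvd_neg.mpr h2, dvd_add ?_ ?_⟩
      · exact Dvd.dvd.mul_right (pow_dvd_pow q hik) _
      · exact Dvd.dvd.mul_left h2 _
  · intro i hki
    have hk1i : k - 1 ≤ i := by omega
    constructor
    · rintro ⟨hd1, hd2⟩
      have h2 : q ^ i ∣ phiA p (ringOfInt E) x₂ := dvd_neg.mp hd1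
      have hx2 : PowerSeries.X ^ i ∣ x₂ := (hkey i x₂).mp h2
      have h3 : q ^ i ∣ PowerSeries.C α * z * phiA p (ringOfInt E) x₂ :=
        Dvd.dvd.mul_left h2 _
      have h4 : q ^ i ∣ q ^ (k-1) * phiA p (ringOfInt E) x₁ := by
        have := dvd_sub hd2 h3
        simpa using this
      obtain ⟨w, hw⟩ := h4
      have h5 : phiA p (ringOfInt E) x₁ = q ^ (i - (k-1)) * w := by
        apply mul_left_cancel₀ (pow_ne_zero (k-1) hqne)
        rw [← mul_assoc, ← pow_add, Nat.add_sub_cancel' hk1i, ← hw]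
      have hx1 : PowerSeries.X ^ (i - (k-1)) ∣ x₁ :=
        (hkey (i - (k-1)) x₁).mp ⟨w, h5⟩
      exact ⟨hx1, hx2⟩
    · rintro ⟨hx1, hx2⟩
      have h2 : q ^ i ∣ phiA p (ringOfInt E) x₂ := (hkey i x₂).mpr hx2
      refine ⟨dvd_neg.mpr h2, dvd_add ?_ (Dvd.dvd.mul_left h2 _)⟩
      have h1 : q ^ (i - (k-1)) ∣ phiA p (ringOfInt E) x₁ :=
        (hkey (i - (k-1)) x₁).mpr hx1
      obtain ⟨u, hu⟩ := h1
      refine ⟨u, ?_⟩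
      rw [hu, ← mul_assoc, ← pow_add, Nat.add_sub_cancel' hk1i]
end
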